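/- arXiv:1611.01996 — 10 statements merged into one kernel-verified Lean document; each statement's English description precedes it below -/
import Mathlib

section
/- Let E be a complete real inner product space and let f : E → ℝ be a continuously differentiable function that is bounded below and satisfies a global Łojasiewicz inequality. Then f is flow-closed: for every differentiable curve x : [0,∞) → E satisfying x'(t) = −∇f(x(t)) for all t ≥ 0, the limit lim_{t→∞} x(t) exists in E; in particular the trajectory {x(t) : t ≥ 0} is contained in a compact subset of E. -/
open Set Filter Metric


/-- **Flow-closedness from a global Łojasiewicz inequality.**
Let `E` be a complete real inner product space and `f : E → ℝ` a continuously
differentiable function that is bounded below and satisfies a global Łojasiewicz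
inequality (for every `f_c` in the closure of the range of `f` there are `ε > 0`,
`k > 0` and `0 < α < 1` with `‖∇f x‖ ≥ k * |f x - f_c| ^ α` whenever
`|f x - f_c| < ε`).  Then every trajectory of the negative gradient flow defined on
`[0, ∞)` converges as `t → ∞`; in particular it is contained in a compact subset. -/
theorem stmt_0
    {E : Type*} [NormedAddCommGroup E] [InnerProductSpace ℝ E] [CompleteSpace E]
    (f : E → ℝ) (hf : ContDiff ℝ 1 f)
    (hbdd : BddBelow (Set.range f))
    (hLoj : ∀ fc ∈ closure (Set.range f), ∃ ε > (0 : ℝ), ∃ k > (0 : ℝ), ∃ a : ℝ,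
      0 < a ∧ a < 1 ∧
        ∀ x : E, |f x - fc| < ε → k * |f x - fc| ^ a ≤ ‖gradient f x‖)
    (x : ℝ → E)
    (hx : ∀ t : ℝ, 0 ≤ t → HasDerivWithinAt x (-(gradient f (x t))) (Set.Ici 0) t) :
    (∃ L : E, Filter.Tendsto x Filter.atTop (nhds L)) ∧
      ∃ K : Set E, IsCompact K ∧ ∀ t : ℝ, 0 ≤ t → x t ∈ K := by
  classical
  set g : E → E := fun y => gradient f y with hgdef
  have hxc : ContinuousOn x (Set.Ici 0) := fun t ht => (hx t ht).continuousWithinAt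
  set F : ℝ → ℝ := fun t => f (x t) with hFdef
  -- derivative of F
  have hE : ∀ t : ℝ, 0 ≤ t → HasDerivWithinAt F (-(‖g (x t)‖ ^ 2)) (Set.Ici 0) t := by
    intro t ht
    have h1 : HasFDerivAt f (InnerProductSpace.toDual ℝ E (g (x t))) (x t) :=
      ((hf.differentiable one_ne_zero) (x t)).hasGradientAt.hasFDerivAt
    have h2 := h1.comp_hasDerivWithinAt t (hx t ht)
    refine h2.congr_deriv ?_
    simp only [InnerProductSpace.toDual_apply_apply, inner_neg_right]
    exact congrArg Neg.neg (real_inner_self_eq_norm_sq _)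
  -- continuity of F on Ici 0
  have hFc : ContinuousOn F (Set.Ici 0) := fun t ht => (hE t ht).continuousWithinAt
  -- F is antitone on Ici 0
  have hanti : AntitoneOn F (Set.Ici 0) := by
    have hint : ∀ t ∈ interior (Set.Ici (0:ℝ)), HasDerivAt F (-(‖g (x t)‖ ^ 2)) t := by
      intro t ht
      rw [interior_Ici] at ht
      exact (hE t ht.le).hasDerivAt (Ici_mem_nhds ht)
    refine antitoneOn_of_deriv_nonpos (convex_Ici 0) hFc
      (fun t ht => (hint t ht).differentiableAt.differentiableWithinAt) ?_
    intro t ht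
    rw [(hint t ht).deriv]
    simp only [neg_nonpos]
    positivity
  -- the limit value c of F
  set F' : ℝ → ℝ := fun t => F (max t 0) with hF'def
  have hanti' : Antitone F' := by
    intro s t hst
    exact hanti (le_max_right s 0) (le_max_right t 0) (max_le_max hst le_rfl)
  have hbdd' : BddBelow (Set.range F') := by
    refine hbdd.mono ?_
    rintro _ ⟨t, rfl⟩
    exact ⟨x (max t 0), rfl⟩
  set c : ℝ := ⨅ t, F' t with hcdef
  have hF'lim : Filter.Tendsto F' Filter.atTop (nhds c) := tendsto_atTop_ciInf hanti' hbdd'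
  have hFlim : Filter.Tendsto F Filter.atTop (nhds c) := by
    refine hF'lim.congr' ?_
    filter_upwards [eventually_ge_atTop (0:ℝ)] with t ht
    simp [hF'def, max_eq_left ht]
  have hcmem : c ∈ closure (Set.range f) :=
    mem_closure_of_tendsto hFlim (Filter.Eventually.of_forall fun t => ⟨x t, rfl⟩)
  have hFge : ∀ t : ℝ, 0 ≤ t → c ≤ F t := by
    intro t ht
    refine le_of_tendsto hFlim ?_
    filter_upwards [eventually_ge_atTop t] with s hs
    exact hanti ht (ht.trans hs) hs
  obtain ⟨ε, hε, k, hk, a, ha0, ha1, hloj⟩ := hLoj c hcmem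
  -- main convergence claim
  have hconv : ∃ L : E, Filter.Tendsto x Filter.atTop (nhds L) := by
    by_cases hcase : ∃ t₀ : ℝ, 0 ≤ t₀ ∧ F t₀ = c
    · -- the trajectory hits the limit level: it is eventually constant
      obtain ⟨t₀, ht₀, hFt₀⟩ := hcase
      have hFconst : ∀ u : ℝ, t₀ ≤ u → F u = c := fun u hu =>
        le_antisymm (hFt₀ ▸ hanti ht₀ (ht₀.trans hu) hu) (hFge u (ht₀.trans hu))
      have hg0 : ∀ u : ℝ, t₀ ≤ u → g (x u) = 0 := by
        intro u hu
        have h1 : HasDerivWithinAt F (-(‖g (x u)‖ ^ 2)) (Set.Ici t₀) u :=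
          (hE u (ht₀.trans hu)).mono (Set.Ici_subset_Ici.2 ht₀)
        have h2 : HasDerivWithinAt F 0 (Set.Ici t₀) u :=
          (hasDerivWithinAt_const u (Set.Ici t₀) c).congr
            (fun v hv => hFconst v hv) (hFconst u hu)
        have hu' : UniqueDiffWithinAt ℝ (Set.Ici t₀) u := uniqueDiffOn_Ici t₀ u hu
        have heq : -(‖g (x u)‖ ^ 2) = 0 := by
          rw [← h1.derivWithin hu', h2.derivWithin hu']
        have : ‖g (x u)‖ = 0 := by nlinarith [norm_nonneg (g (x u))]
        exact norm_eq_zero.1 this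
      have hxconst : ∀ u : ℝ, t₀ ≤ u → x u = x t₀ := by
        intro u hu
        have hseg := norm_image_sub_le_of_norm_deriv_le_segment'
          (f := x) (f' := fun v => -(g (x v))) (C := 0) (a := t₀) (b := u)
          (fun v hv => (hx v (ht₀.trans hv.1)).mono fun w hw => ht₀.trans hw.1)
          (fun v hv => by simp [hg0 v hv.1])
        have h0 : ‖x u - x t₀‖ ≤ 0 := by
          simpa using hseg u (Set.right_mem_Icc.2 hu)
        exact sub_eq_zero.1 (norm_le_zero_iff.1 h0)
      refine ⟨x t₀, tendsto_const_nhds.congr' ?_⟩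
      filter_upwards [eventually_ge_atTop t₀] with u hu
      exact (hxconst u hu).symm
    · -- the trajectory stays strictly above the limit level
      push_neg at hcase
      have hpos : ∀ t : ℝ, 0 ≤ t → 0 < F t - c := fun t ht =>
        sub_pos.2 (lt_of_le_of_ne (hFge t ht) (Ne.symm (hcase t ht)))
      set y : ℝ → ℝ := fun t => (F t - c) ^ (1 - a) with hydef
      -- choose T₀ past which we are within ε of c
      obtain ⟨T₁, hT₁⟩ := Metric.tendsto_atTop.1 hFlim ε hε
      set T₀ : ℝ := max T₁ 0 with hT₀def
      have hT₀0 : (0 : ℝ) ≤ T₀ := le_max_right _ _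
      have hT₀ : ∀ u : ℝ, T₀ ≤ u → F u - c < ε := by
        intro u hu
        have := hT₁ u ((le_max_left _ _).trans hu)
        rw [Real.dist_eq] at this
        exact (le_abs_self _).trans_lt this
      have ha1' : (0 : ℝ) < 1 - a := by linarith
      have hden : (0 : ℝ) < (1 - a) * k := by positivity
      -- the key length estimate
      have key : ∀ s t : ℝ, T₀ ≤ s → s ≤ t →
          ‖x t - x s‖ ≤ (y s - y t) / ((1 - a) * k) := by
        intro s t hs hst
        have hs0 : (0 : ℝ) ≤ s := hT₀0.trans hs
        have hsub : Set.Icc s t ⊆ Set.Ici (0 : ℝ) := fun w hw => hs0.trans hw.1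
        set B : ℝ → ℝ := fun u => (y s - y u) / ((1 - a) * k) with hBdef
        set B' : ℝ → ℝ := fun u =>
          (1 - a) * (F u - c) ^ (1 - a - 1) * (‖g (x u)‖ ^ 2) / ((1 - a) * k) with hB'def
        have hydiff : ∀ u : ℝ, 0 ≤ u → HasDerivWithinAt y
            ((1 - a) * (F u - c) ^ (1 - a - 1) * (-(‖g (x u)‖ ^ 2))) (Set.Ici u) u := by
          intro u hu0
          have h1 : HasDerivWithinAt (fun v => F v - c) (-(‖g (x u)‖ ^ 2)) (Set.Ici u) u :=
            ((hE u hu0).mono (Set.Ici_subset_Ici.2 hu0)).sub_const c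
          have h2 : HasDerivAt (fun z : ℝ => z ^ (1 - a))
              ((1 - a) * (F u - c) ^ (1 - a - 1)) (F u - c) :=
            Real.hasDerivAt_rpow_const (Or.inl (ne_of_gt (hpos u hu0)))
          exact h2.comp_hasDerivWithinAt u h1
        have hB'der : ∀ u ∈ Set.Ico s t, HasDerivWithinAt B (B' u) (Set.Ici u) u := by
          intro u hu
          have hu0 : (0 : ℝ) ≤ u := hs0.trans hu.1
          have := ((hydiff u hu0).const_sub (y s)).div_const ((1 - a) * k)
          refine this.congr_deriv ?_
          simp only [hB'def]
          ring
        have hbound : ∀ u ∈ Set.Ico s t, ‖-(g (x u))‖ ≤ B' u := by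
          intro u hu
          have hu0 : (0 : ℝ) ≤ u := hs0.trans hu.1
          have hupos := hpos u hu0
          have habs : |F u - c| = F u - c := abs_of_pos hupos
          have hlt : |F u - c| < ε := by rw [habs]; exact hT₀ u (hs.trans hu.1)
          have hkP : k * (F u - c) ^ a ≤ ‖g (x u)‖ := by
            have := hloj (x u) hlt
            rwa [habs] at this
          have hPpos : (0 : ℝ) < (F u - c) ^ a := Real.rpow_pos_of_pos hupos a
          have hrw : (F u - c) ^ (1 - a - 1) = ((F u - c) ^ a)⁻¹ := by
            rw [show (1 : ℝ) - a - 1 = -a by ring, Real.rpow_neg hupos.le]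
          rw [norm_neg, hB'def]
          simp only [hrw]
          set G : ℝ := ‖g (x u)‖ with hGdef
          have hGnn : (0 : ℝ) ≤ G := norm_nonneg _
          have hrs : (1 - a) * ((F u - c) ^ a)⁻¹ * G ^ 2 / ((1 - a) * k)
              = G ^ 2 / ((F u - c) ^ a * k) := by
            field_simp [ha1'.ne', hPpos.ne', hk.ne']
          rw [hrs, le_div_iff₀ (by positivity)]
          calc G * ((F u - c) ^ a * k) = G * (k * (F u - c) ^ a) := by ring
            _ ≤ G * G := mul_le_mul_of_nonneg_left hkP hGnn
            _ = G ^ 2 := by ring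
        have hycont : ContinuousOn y (Set.Icc s t) :=
          ((hFc.mono hsub).sub continuousOn_const).rpow_const
            (fun u _ => Or.inr ha1'.le)
        have hmain := image_norm_le_of_norm_deriv_right_le_deriv_boundary'
          (f := fun u => x u - x s) (f' := fun u => -(g (x u))) (a := s) (b := t)
          ((hxc.mono hsub).sub continuousOn_const)
          (fun u hu => ((hx u (hs0.trans hu.1)).mono (Set.Ici_subset_Ici.2 (hs0.trans hu.1))).sub_const _)
          (by simp [hBdef, hydef])
          ((continuousOn_const.sub hycont).div_const _)
          hB'der hbound
        simpa [hBdef] using hmain (Set.right_mem_Icc.2 hst)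
      -- y tends to 0, hence the curve is Cauchy
      have hy0 : Filter.Tendsto y Filter.atTop (nhds 0) := by
        have h1 : Filter.Tendsto (fun t => F t - c) Filter.atTop (nhds 0) := by
          simpa using hFlim.sub_const c
        have h2 : ContinuousAt (fun z : ℝ => z ^ (1 - a)) 0 :=
          Real.continuousAt_rpow_const 0 (1 - a) (Or.inr ha1'.le)
        have h3 := h2.tendsto.comp h1
        simpa [hydef, Function.comp_def, Real.zero_rpow (ne_of_gt ha1')] using h3
      have hcauchy : CauchySeq x := by
        rw [Metric.cauchySeq_iff']
        intro δ hδ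
        have hy0' : Filter.Tendsto (fun N => y N / ((1 - a) * k)) Filter.atTop (nhds 0) := by
          simpa using hy0.div_const ((1 - a) * k)
        have hev : ∀ᶠ N : ℝ in Filter.atTop, y N / ((1 - a) * k) < δ ∧ T₀ ≤ N :=
          (hy0'.eventually (gt_mem_nhds hδ)).and (eventually_ge_atTop T₀)
        obtain ⟨N, hN1, hN2⟩ := hev.exists
        refine ⟨N, fun n hn => ?_⟩
        have hkey := key N n hN2 hn
        have hyn : (0 : ℝ) ≤ y n :=
          Real.rpow_nonneg (hpos n ((hT₀0.trans hN2).trans hn)).le _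
        rw [dist_eq_norm]
        calc ‖x n - x N‖ ≤ (y N - y n) / ((1 - a) * k) := hkey
          _ ≤ y N / ((1 - a) * k) := by
              apply div_le_div_of_nonneg_right ?_ hden.le
              linarith
          _ < δ := hN1
      exact cauchySeq_tendsto_of_complete hcauchy
  obtain ⟨L, hL⟩ := hconv
  refine ⟨⟨L, hL⟩, insert L (Set.range fun t : ℝ => x |t|), ?_, ?_⟩
  · refine Filter.Tendsto.isCompact_insert_range_of_cocompact ?_ ?_
    · have habs : Filter.Tendsto (fun t : ℝ => |t|) (Filter.cocompact ℝ) Filter.atTop := by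
        exact (tendsto_norm_cocompact_atTop (E := ℝ)).congr fun t => Real.norm_eq_abs t
      exact hL.comp habs
    · exact hxc.comp_continuous continuous_abs fun t => abs_nonneg t
  · intro t ht
    exact Set.mem_insert_iff.2 (Or.inr ⟨t, congrArg x (abs_of_nonneg ht)⟩)
end

section
/- Let V₁ and V₂ be finite-dimensional real inner product spaces, A : V₁ → V₂ a linear map, α ∈ V₂, and let φ : V₁ → V₂ be the affine map φ(v) = A v − α. Then for every φ_c in the image of φ there exist constants c > 0 and ε > 0 such that ‖v‖·‖φ(v)‖² ≥ c·| ‖φ(v)‖² − ‖φ_c‖² |^{3/2} for all v ∈ V₁ with ‖φ(v) − φ_c‖ < ε. -/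
private lemma rpow32 (x : ℝ) (hx : 0 ≤ x) : x ^ (3/2 : ℝ) = x ^ (1/2 : ℝ) * x := by
  rcases eq_or_lt_of_le hx with h|h
  · rw [← h, Real.zero_rpow (by norm_num), Real.zero_rpow (by norm_num), zero_mul]
  · nth_rewrite 3 [← Real.rpow_one x]
    rw [← Real.rpow_add h]
    norm_num

private lemma sq32 (t : ℝ) (ht : 0 ≤ t) : (t ^ 2) ^ (3/2 : ℝ) = t * t ^ 2 := by
  have h1 : (t ^ 2 : ℝ) = t ^ (2 : ℝ) := by
    rw [← Real.rpow_natCast t 2]; norm_num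
  rw [h1, ← Real.rpow_mul ht]
  norm_num
  ring

/-- **Affine quadratic estimate.**  Let `V₁, V₂` be finite-dimensional real inner
product spaces, `A : V₁ → V₂` linear, `α ∈ V₂` and `φ v = A v - α`.  For every
`φ_c = φ v_c` in the image of `φ` there exist `c > 0` and `ε > 0` such that
`‖v‖ ⬝ ‖φ v‖² ≥ c ⬝ |‖φ v‖² - ‖φ_c‖²| ^ (3/2)` whenever `‖φ v - φ_c‖ < ε`. -/
theorem stmt_5
    {V₁ V₂ : Type*}
    [NormedAddCommGroup V₁] [InnerProductSpace ℝ V₁] [FiniteDimensional ℝ V₁]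
    [NormedAddCommGroup V₂] [InnerProductSpace ℝ V₂] [FiniteDimensional ℝ V₂]
    (A : V₁ →ₗ[ℝ] V₂) (α : V₂) (φ : V₁ → V₂) (hφ : ∀ v, φ v = A v - α)
    (vc : V₁) :
    ∃ c > (0 : ℝ), ∃ ε > (0 : ℝ), ∀ v : V₁, ‖φ v - φ vc‖ < ε →
      c * |‖φ v‖ ^ 2 - ‖φ vc‖ ^ 2| ^ (3 / 2 : ℝ) ≤ ‖v‖ * ‖φ v‖ ^ 2 := by
  set A' : V₁ →L[ℝ] V₂ := LinearMap.toContinuousLinearMap A with hA'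
  have hAv : ∀ v, A' v = A v := fun v => rfl
  have hsub : ∀ v, φ v - φ vc = A' v - A' vc := by
    intro v; rw [hφ, hφ, hAv, hAv]; abel
  set β := φ vc with hβ
  obtain ⟨e1, he1, he1β⟩ : ∃ e1 > (0:ℝ), β ≠ 0 → e1 ≤ ‖β‖/2 := by
    by_cases h : β = 0
    · exact ⟨1, one_pos, fun hb => absurd h hb⟩
    · exact ⟨‖β‖/2, half_pos (norm_pos_iff.mpr h), fun _ => le_refl _⟩
  have key : ∃ ε > (0:ℝ), (β ≠ 0 → ε ≤ ‖β‖/2) ∧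
      ∃ L ≥ (0:ℝ), ∀ v, ‖φ v - β‖ < ε → ‖φ v - β‖ ≤ L * ‖v‖ := by
    by_cases hB : A' vc = 0
    · refine ⟨e1, he1, he1β, ‖A'‖, norm_nonneg _, fun v _ => ?_⟩
      calc ‖φ v - β‖ = ‖A' v‖ := by rw [hsub v, hB, sub_zero]
        _ ≤ ‖A'‖ * ‖v‖ := A'.le_opNorm v
    · have hA'ne : A' ≠ 0 := fun h => hB (by rw [h]; rfl)
      have hApos : 0 < ‖A'‖ := norm_pos_iff.mpr hA'ne
      set δ : ℝ := ‖A' vc‖ / (2 * ‖A'‖) with hδ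
      have hδpos : 0 < δ := by
        apply div_pos (norm_pos_iff.mpr hB); positivity
      set ε : ℝ := min e1 (‖A' vc‖/2) with hε
      have hεpos : 0 < ε := lt_min he1 (half_pos (norm_pos_iff.mpr hB))
      refine ⟨ε, hεpos, fun h => le_trans (min_le_left _ _) (he1β h),
        ε/δ, le_of_lt (div_pos hεpos hδpos), fun v hv => ?_⟩
      have h1 : ‖A' vc‖/2 ≤ ‖A'‖ * ‖v‖ := by
        have h2 : ‖A' v - A' vc‖ < ‖A' vc‖/2 :=
          lt_of_lt_of_le (by rw [← hsub v]; exact hv) (min_le_right _ _)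
        have h3 : ‖A' vc‖ - ‖A' v‖ ≤ ‖A' v - A' vc‖ := by
          have := norm_sub_norm_le (A' vc) (A' v)
          rwa [norm_sub_rev] at this
        have h4 : ‖A' v‖ ≤ ‖A'‖ * ‖v‖ := A'.le_opNorm v
        linarith
      have hδv : δ ≤ ‖v‖ := by
        rw [hδ, div_le_iff₀ (by positivity)]
        linarith [h1, mul_comm ‖A'‖ ‖v‖]
      have : ε ≤ ε/δ * ‖v‖ := by
        rw [div_mul_eq_mul_div, le_div_iff₀ hδpos]
        nlinarith
      linarith
  obtain ⟨ε, hεpos, hεβ, L, hL0, hL⟩ := key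
  clear hsub hAv hA' hφ
  clear_value β
  by_cases hβ0 : β = 0
  · refine ⟨1/(L+1), by positivity, ε, hεpos, fun v hv => ?_⟩
    rw [hβ0, norm_zero]
    have h1 : |‖φ v‖^2 - 0^2| = ‖φ v‖^2 := by
      rw [show ((0:ℝ))^2 = 0 by norm_num, sub_zero, abs_of_nonneg (by positivity)]
    rw [h1, sq32 _ (norm_nonneg _)]
    have h2 : ‖φ v‖ ≤ L * ‖v‖ := by
      have := hL v hv
      rwa [hβ0, sub_zero] at this
    have h3 : (0:ℝ) ≤ ‖φ v‖^2 := by positivity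
    have h4 : 1/(L+1) * (‖φ v‖ * ‖φ v‖^2) ≤ 1/(L+1) * ((L*‖v‖) * ‖φ v‖^2) := by
      apply mul_le_mul_of_nonneg_left (mul_le_mul_of_nonneg_right h2 h3) (by positivity)
    have h5 : 1/(L+1) * ((L*‖v‖) * ‖φ v‖^2) ≤ ‖v‖ * ‖φ v‖^2 := by
      rw [div_mul_eq_mul_div, one_mul, div_le_iff₀ (by positivity)]
      nlinarith [norm_nonneg v]
    linarith
  · have hβpos : 0 < ‖β‖ := norm_pos_iff.mpr hβ0
    have hεβ' := hεβ hβ0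
    obtain ⟨K, hK0, hKbd⟩ : ∃ K ≥ (0:ℝ), ∀ v, ‖φ v - β‖ < ε →
        |‖φ v‖^2 - ‖β‖^2| ^ (3/2:ℝ) ≤ K * ‖v‖ := by
      refine ⟨((5*‖β‖/2) * ε)^(1/2:ℝ) * (5*‖β‖/2) * L, by positivity, fun v hv => ?_⟩
      have hφub : ‖φ v‖ ≤ 3*‖β‖/2 := by
        have := norm_sub_norm_le (φ v) β
        linarith [lt_of_lt_of_le hv hεβ']
      have hD0 : (0:ℝ) ≤ |‖φ v‖^2 - ‖β‖^2| := abs_nonneg _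
      have hDfac : |‖φ v‖^2 - ‖β‖^2| = (‖φ v‖ + ‖β‖) * |‖φ v‖ - ‖β‖| := by
        rw [show ‖φ v‖^2 - ‖β‖^2 = (‖φ v‖ + ‖β‖) * (‖φ v‖ - ‖β‖) by ring,
          abs_mul, abs_of_nonneg (by positivity)]
      have habs : |‖φ v‖ - ‖β‖| ≤ ‖φ v - β‖ := abs_norm_sub_norm_le _ _
      have hDM : |‖φ v‖^2 - ‖β‖^2| ≤ (5*‖β‖/2) * ε := by
        rw [hDfac]
        apply mul_le_mul (by linarith) (le_of_lt (lt_of_le_of_lt habs hv))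
          (abs_nonneg _) (by positivity)
      have hDv : |‖φ v‖^2 - ‖β‖^2| ≤ (5*‖β‖/2) * (L * ‖v‖) := by
        rw [hDfac]
        apply mul_le_mul (by linarith) (le_trans habs (hL v hv)) (abs_nonneg _) (by positivity)
      rw [rpow32 _ hD0]
      have hh : |‖φ v‖^2 - ‖β‖^2| ^ (1/2:ℝ) ≤ ((5*‖β‖/2) * ε) ^ (1/2:ℝ) :=
        Real.rpow_le_rpow hD0 hDM (by norm_num)
      calc |‖φ v‖^2 - ‖β‖^2| ^ (1/2:ℝ) * |‖φ v‖^2 - ‖β‖^2|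
          ≤ ((5*‖β‖/2) * ε) ^ (1/2:ℝ) * ((5*‖β‖/2) * (L * ‖v‖)) := by
            apply mul_le_mul hh hDv hD0 (by positivity)
        _ = ((5*‖β‖/2) * ε)^(1/2:ℝ) * (5*‖β‖/2) * L * ‖v‖ := by ring
    refine ⟨(‖β‖^2/4)/(K+1), by positivity, ε, hεpos, fun v hv => ?_⟩
    have hφlb : ‖β‖/2 ≤ ‖φ v‖ := by
      have h3 : ‖β‖ - ‖φ v‖ ≤ ‖φ v - β‖ := by
        have := norm_sub_norm_le β (φ v)
        rwa [norm_sub_rev] at this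
      linarith [lt_of_lt_of_le hv hεβ']
    have h32 := hKbd v hv
    have hRHS : ‖v‖ * (‖β‖^2/4) ≤ ‖v‖ * ‖φ v‖^2 := by
      apply mul_le_mul_of_nonneg_left _ (norm_nonneg v)
      have h8 : (‖β‖/2)^2 ≤ ‖φ v‖^2 := by
        apply pow_le_pow_left₀ (by positivity) hφlb
      nlinarith [h8]
    have h6 : (‖β‖^2/4)/(K+1) * |‖φ v‖^2 - ‖β‖^2| ^ (3/2:ℝ) ≤ (‖β‖^2/4)/(K+1) * (K * ‖v‖) :=
      mul_le_mul_of_nonneg_left h32 (by positivity)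
    have h7 : (‖β‖^2/4)/(K+1) * (K * ‖v‖) ≤ ‖v‖ * (‖β‖^2/4) := by
      rw [div_mul_eq_mul_div, div_le_iff₀ (by positivity)]
      nlinarith [norm_nonneg v, sq_nonneg ‖β‖]
    linarith
end

section
/- Let N ≥ 1, let E be a finite-dimensional real inner product space, let A : M_N(ℂ) → E be an ℝ-linear map on the space of N×N complex matrices, and let α ∈ E. Define μ : ℂᴺ → E by μ(x) = A(x x*) − α, where x x* denotes the N×N matrix with entries x_i·conj(x_j), and set f = ‖μ‖². Then for every μ_c ∈ E there exist constants c > 0 and ε > 0 such that ‖x‖²·f(x) ≥ c·|f(x) − f_c|^{3/2} for all x ∈ ℂᴺ with ‖μ(x) − μ_c‖ < ε, where f_c = ‖μ_c‖². -/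
attribute [local instance] Matrix.normedAddCommGroup Matrix.normedSpace

private lemma stmt6_coord_le_norm {N : ℕ} (x : EuclideanSpace ℂ (Fin N)) (i : Fin N) :
    ‖x i‖ ≤ ‖x‖ := by
  rw [EuclideanSpace.norm_eq]
  have h1 : ‖x i‖ = Real.sqrt (‖x i‖ ^ 2) := by
    rw [Real.sqrt_sq (norm_nonneg _)]
  rw [h1]
  apply Real.sqrt_le_sqrt
  exact Finset.single_le_sum (f := fun j => ‖x j‖ ^ 2)
    (fun j _ => sq_nonneg _) (Finset.mem_univ i)

private lemma stmt6_key_ineq {a t s D : ℝ} (ht : 0 ≤ t) (hD : 0 ≤ D) (ha : 0 ≤ a)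
    (hfa : a ≤ D * (t + s)) (hDle : D ≤ t + s) (hs : s ≤ 2 * t) :
    a ^ (3 / 2 : ℝ) ≤ 9 * t ^ 2 * D := by
  have h3t : t + s ≤ 3 * t := by linarith
  have haD : a ≤ 3 * t * D := le_trans hfa (by nlinarith)
  have h1 : a ^ (3/2 : ℝ) ≤ (3 * t * D) ^ (3/2 : ℝ) :=
    Real.rpow_le_rpow ha haD (by norm_num)
  have h2 : (3 * t * D) ^ (3/2 : ℝ) = (3*t) ^ (3/2:ℝ) * D ^ (3/2:ℝ) :=
    Real.mul_rpow (by positivity) hD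
  have hD3t : D ≤ 3 * t := le_trans hDle h3t
  have h3 : D ^ (3/2:ℝ) ≤ (3*t) ^ (1/2:ℝ) * D := by
    rw [show (3/2:ℝ) = 1/2 + 1 by norm_num, Real.rpow_add' hD (by norm_num),
      Real.rpow_one]
    exact mul_le_mul_of_nonneg_right
      (Real.rpow_le_rpow hD hD3t (by norm_num)) hD
  have h4 : (3*t) ^ (3/2:ℝ) * ((3*t) ^ (1/2:ℝ) * D) = 9 * t^2 * D := by
    rw [← mul_assoc, ← Real.rpow_add' (by positivity) (by norm_num),
      show (3/2:ℝ)+(1/2:ℝ) = ((2:ℕ):ℝ) by norm_num, Real.rpow_natCast]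
    ring
  calc a ^ (3/2:ℝ) ≤ (3*t) ^ (3/2:ℝ) * D ^ (3/2:ℝ) := h2 ▸ h1
    _ ≤ (3*t) ^ (3/2:ℝ) * ((3*t) ^ (1/2:ℝ) * D) :=
        mul_le_mul_of_nonneg_left h3 (by positivity)
    _ = 9 * t^2 * D := h4

set_option maxHeartbeats 1000000 in
/-- **Key quadratic estimate for moment maps of linear actions.**  Let
`μ : ℂᴺ → E`, `μ x = A (x x*) - α` for an `ℝ`-linear map `A` on `N × N` complex
matrices (where `(x x*) i j = x i * conj (x j)`), and `f = ‖μ‖²`.  For every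
`μ_c ∈ E` there exist `c > 0` and `ε > 0` such that
`‖x‖² ⬝ f x ≥ c ⬝ |f x - f_c| ^ (3/2)` (with `f_c = ‖μ_c‖²`) whenever
`‖μ x - μ_c‖ < ε`. -/
theorem stmt_6
    {E : Type*} [NormedAddCommGroup E] [InnerProductSpace ℝ E] [FiniteDimensional ℝ E]
    (N : ℕ) (hN : 1 ≤ N)
    (A : Matrix (Fin N) (Fin N) ℂ →ₗ[ℝ] E) (α : E)
    (μ : EuclideanSpace ℂ (Fin N) → E)
    (hμ : ∀ x : EuclideanSpace ℂ (Fin N),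
      μ x = A (Matrix.of fun i j => x i * (starRingEnd ℂ) (x j)) - α)
    (f : EuclideanSpace ℂ (Fin N) → ℝ) (hf : ∀ x, f x = ‖μ x‖ ^ 2)
    (μc : E) :
    ∃ c > (0 : ℝ), ∃ ε > (0 : ℝ), ∀ x : EuclideanSpace ℂ (Fin N),
      ‖μ x - μc‖ < ε →
        c * |f x - ‖μc‖ ^ 2| ^ (3 / 2 : ℝ) ≤ ‖x‖ ^ 2 * f x := by
  classical
  set A' := LinearMap.toContinuousLinearMap A with hA'
  set C := @Norm.norm _ ContinuousLinearMap.hasOpNorm A' with hCdef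
  have hC0 : 0 ≤ C := norm_nonneg _
  -- norm bound on A (x x*)
  have hAb : ∀ x : EuclideanSpace ℂ (Fin N),
      ‖A (Matrix.of fun i j => x i * (starRingEnd ℂ) (x j))‖ ≤ C * ‖x‖ ^ 2 := by
    intro x
    have hM : ‖(Matrix.of fun i j => x i * (starRingEnd ℂ) (x j) :
        Matrix (Fin N) (Fin N) ℂ)‖ ≤ ‖x‖ ^ 2 := by
      rw [Matrix.norm_le_iff (sq_nonneg _)]
      intro i j
      simp only [Matrix.of_apply, norm_mul, RCLike.norm_conj]
      rw [sq]
      exact mul_le_mul (stmt6_coord_le_norm x i) (stmt6_coord_le_norm x j)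
        (norm_nonneg _) (norm_nonneg _)
    have h1 : A (Matrix.of fun i j => x i * (starRingEnd ℂ) (x j)) =
        A' (Matrix.of fun i j => x i * (starRingEnd ℂ) (x j)) := by
      simp [hA']
    rw [h1]
    calc ‖A' _‖ ≤ C * ‖(Matrix.of fun i j => x i * (starRingEnd ℂ) (x j) :
        Matrix (Fin N) (Fin N) ℂ)‖ := A'.le_opNorm _
      _ ≤ C * ‖x‖ ^ 2 := mul_le_mul_of_nonneg_left hM hC0
  set s := ‖μc‖ with hsdef
  have hs0 : 0 ≤ s := norm_nonneg _
  set β := α + μc with hβdef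
  have hμβ : ∀ x, μ x - μc
      = A (Matrix.of fun i j => x i * (starRingEnd ℂ) (x j)) - β := by
    intro x
    rw [hμ x, hβdef]
    abel
  -- choose ε
  by_cases hβ : β = 0
  · -- case β = 0 : D ≤ C ‖x‖²
    have hε0 : (0:ℝ) < if s = 0 then 1 else s / 2 := by
      split_ifs with hs
      · norm_num
      · exact half_pos (lt_of_le_of_ne hs0 (Ne.symm hs))
    refine ⟨1 / (9 * (C + 1)), by positivity,
      if s = 0 then 1 else s / 2, hε0, ?_⟩
    intro x hx
    set t := ‖μ x‖ with htdef
    have ht0 : 0 ≤ t := norm_nonneg _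
    set D := ‖μ x - μc‖ with hDdef
    have hD0 : 0 ≤ D := norm_nonneg _
    have hDle : D ≤ t + s := norm_sub_le _ _
    have hst : s ≤ 2 * t := by
      by_cases hs : s = 0
      · rw [hs]; linarith
      · have hε : D < s / 2 := by simpa [hs] using hx
        have : s - t ≤ D := by
          calc s - t ≤ ‖μc - μ x‖ := norm_sub_norm_le _ _
            _ = D := by rw [norm_sub_rev]
        linarith
    have hfa : |f x - s ^ 2| ≤ D * (t + s) := by
      rw [hf x, ← htdef]
      have h1 : t ^ 2 - s ^ 2 = (t - s) * (t + s) := by ring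
      rw [h1, abs_mul, abs_of_nonneg (by linarith : (0:ℝ) ≤ t + s)]
      exact mul_le_mul_of_nonneg_right (abs_norm_sub_norm_le _ _)
        (by linarith)
    have hkey : |f x - s ^ 2| ^ (3/2 : ℝ) ≤ 9 * t ^ 2 * D :=
      stmt6_key_ineq ht0 hD0 (abs_nonneg _) hfa hDle hst
    have hDC : D ≤ C * ‖x‖ ^ 2 := by
      rw [hDdef, hμβ x, hβ, sub_zero]
      exact hAb x
    have hchain : 9 * t ^ 2 * D ≤ 9 * t ^ 2 * (C * ‖x‖ ^ 2) :=
      mul_le_mul_of_nonneg_left hDC (by positivity)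
    have hfinal : (1 / (9 * (C + 1))) * (9 * t ^ 2 * (C * ‖x‖ ^ 2))
        ≤ ‖x‖ ^ 2 * t ^ 2 := by
      rw [show (1 / (9 * (C + 1))) * (9 * t ^ 2 * (C * ‖x‖ ^ 2))
          = (C / (C + 1)) * (‖x‖ ^ 2 * t ^ 2) by field_simp]
      exact mul_le_of_le_one_left (by positivity)
        (by rw [div_le_one (by linarith)]; linarith)
    rw [hf x, ← htdef] at hkey ⊢
    calc (1 / (9 * (C + 1))) * |t ^ 2 - s ^ 2| ^ (3/2 : ℝ)
        ≤ (1 / (9 * (C + 1))) * (9 * t ^ 2 * D) :=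
          mul_le_mul_of_nonneg_left hkey (by positivity)
      _ ≤ (1 / (9 * (C + 1))) * (9 * t ^ 2 * (C * ‖x‖ ^ 2)) :=
          mul_le_mul_of_nonneg_left hchain (by positivity)
      _ ≤ ‖x‖ ^ 2 * t ^ 2 := hfinal
  · -- case β ≠ 0 : ‖x‖² is bounded below
    have hβn : 0 < ‖β‖ := norm_pos_iff.mpr hβ
    set ε := if s = 0 then ‖β‖ / 2 else min (s / 2) (‖β‖ / 2) with hεdef
    have hε0 : 0 < ε := by
      rw [hεdef]
      split_ifs with hs
      · positivity
      · exact lt_min (half_pos (lt_of_le_of_ne hs0 (Ne.symm hs))) (by positivity)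
    have hεβ : ε ≤ ‖β‖ / 2 := by
      rw [hεdef]; split_ifs with hs
      · exact le_refl _
      · exact min_le_right _ _
    set δ := ‖β‖ / (2 * (C + 1)) with hδdef
    have hδ0 : 0 < δ := by positivity
    have hεne : ε ≠ 0 := ne_of_gt hε0
    have hc0 : 0 < δ / (9 * ε) := div_pos hδ0 (by linarith)
    refine ⟨δ / (9 * ε), hc0, ε, hε0, ?_⟩
    intro x hx
    set t := ‖μ x‖ with htdef
    have ht0 : 0 ≤ t := norm_nonneg _
    set D := ‖μ x - μc‖ with hDdef
    have hD0 : 0 ≤ D := norm_nonneg _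
    have hDle : D ≤ t + s := norm_sub_le _ _
    have hst : s ≤ 2 * t := by
      by_cases hs : s = 0
      · rw [hs]; linarith
      · have hεs : ε ≤ s / 2 := by
          rw [hεdef]; simp only [hs, if_false]; exact min_le_left _ _
        have hDs : D < s / 2 := lt_of_lt_of_le hx hεs
        have : s - t ≤ D := by
          calc s - t ≤ ‖μc - μ x‖ := norm_sub_norm_le _ _
            _ = D := by rw [norm_sub_rev]
        linarith
    have hfa : |f x - s ^ 2| ≤ D * (t + s) := by
      rw [hf x, ← htdef]
      have h1 : t ^ 2 - s ^ 2 = (t - s) * (t + s) := by ring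
      rw [h1, abs_mul, abs_of_nonneg (by linarith : (0:ℝ) ≤ t + s)]
      exact mul_le_mul_of_nonneg_right (abs_norm_sub_norm_le _ _)
        (by linarith)
    have hkey : |f x - s ^ 2| ^ (3/2 : ℝ) ≤ 9 * t ^ 2 * D :=
      stmt6_key_ineq ht0 hD0 (abs_nonneg _) hfa hDle hst
    -- lower bound on ‖x‖²
    have hxlb : δ ≤ ‖x‖ ^ 2 := by
      have h1 : ‖β‖ ≤ ‖A (Matrix.of fun i j => x i * (starRingEnd ℂ) (x j))‖ + D := by
        have : β = (A (Matrix.of fun i j => x i * (starRingEnd ℂ) (x j)))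
            - (μ x - μc) := by rw [hμβ x]; abel
        calc ‖β‖ = ‖(A (Matrix.of fun i j => x i * (starRingEnd ℂ) (x j)))
            - (μ x - μc)‖ := by rw [← this]
          _ ≤ _ := norm_sub_le _ _
      have h2 : ‖β‖ / 2 ≤ C * ‖x‖ ^ 2 := by
        have := hAb x
        have hDβ : D < ‖β‖ / 2 := lt_of_lt_of_le hx hεβ
        linarith
      have h3 : ‖β‖ / 2 ≤ (C + 1) * ‖x‖ ^ 2 := by nlinarith [sq_nonneg ‖x‖]
      rw [hδdef, div_le_iff₀ (by positivity)]
      linarith [h3]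
    rw [hf x, ← htdef] at hkey ⊢
    calc (δ / (9 * ε)) * |t ^ 2 - s ^ 2| ^ (3/2 : ℝ)
        ≤ (δ / (9 * ε)) * (9 * t ^ 2 * D) :=
          mul_le_mul_of_nonneg_left hkey (le_of_lt hc0)
      _ ≤ (δ / (9 * ε)) * (9 * t ^ 2 * ε) := by
          apply mul_le_mul_of_nonneg_left _ (le_of_lt hc0)
          exact mul_le_mul_of_nonneg_left (le_of_lt hx) (by positivity)
      _ = δ * t ^ 2 := by
          field_simp
      _ ≤ ‖x‖ ^ 2 * t ^ 2 := mul_le_mul_of_nonneg_right hxlb (sq_nonneg t)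
end

section
/- Let V be a finite-dimensional complex inner product space and let 𝔤 be a finite-dimensional real inner product space realized as a real subspace of the ℂ-linear endomorphisms of V, all of whose elements are skew-adjoint and pairwise commute. Fix a unit vector ŷ ∈ V, let stab(ŷ) = {ξ ∈ 𝔤 : ξ ŷ = 0}, let P : 𝔤 → 𝔤 be the orthogonal projection onto the orthogonal complement of stab(ŷ) in 𝔤, and let Q = id − P. Then there exist an open neighborhood U of ŷ in the unit sphere of V and constants c, c', c'' > 0, depending only on ŷ and U, such that for every ξ ∈ 𝔤 and every x ∈ V \ {0} with x/‖x‖ ∈ U: (i) ‖ξ x‖ ≥ c·‖x‖·‖Pξ‖; (ii) ‖ξ x‖ ≥ c'·‖(Pξ) x‖; (iii) ‖ξ x‖ ≥ c''·(‖(Pξ) x‖ + ‖(Qξ) x‖). -/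
set_option maxHeartbeats 1600000 in
/-- **Pointwise estimates for fundamental vector fields of a torus action
(Lemma `KeyEstimate1`).**  `V` is a finite-dimensional complex inner product space and
`𝔤` a finite-dimensional real inner product space realized (via the injective
`ℝ`-linear map `ρ`) as a subspace of the `ℂ`-linear endomorphisms of `V`, all of whose
elements are skew-adjoint and pairwise commute.  For a unit vector `yhat`, `P` is the
orthogonal projection of `𝔤` onto the orthogonal complement of
`stab yhat = {ξ | ρ ξ yhat = 0}` (characterized by: `ξ - P ξ ∈ stab yhat` and
`P ξ ⟂ stab yhat`), and `Q = id - P`.  Then there are a neighborhood `U` of `yhat` and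
constants `c, c', c'' > 0`, depending only on `yhat` and `U`, such that for all `ξ ∈ 𝔤`
and all `x ≠ 0` with `x/‖x‖ ∈ U`:
(i) `‖ξ x‖ ≥ c ‖x‖ ‖P ξ‖`; (ii) `‖ξ x‖ ≥ c' ‖(P ξ) x‖`;
(iii) `‖ξ x‖ ≥ c'' (‖(P ξ) x‖ + ‖(Q ξ) x‖)`. -/
theorem stmt_7
    {V : Type*} [NormedAddCommGroup V] [InnerProductSpace ℂ V] [FiniteDimensional ℂ V]
    {g : Type*} [NormedAddCommGroup g] [InnerProductSpace ℝ g] [FiniteDimensional ℝ g]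
    (ρ : g →ₗ[ℝ] (V →ₗ[ℂ] V)) (hinj : Function.Injective ρ)
    (hskew : ∀ ξ : g, ∀ u v : V, (inner ℂ (ρ ξ u) v : ℂ) = -(inner ℂ u (ρ ξ v) : ℂ))
    (hcomm : ∀ ξ η : g, ∀ v : V, ρ ξ (ρ η v) = ρ η (ρ ξ v))
    (yhat : V) (hyhat : ‖yhat‖ = 1)
    (P : g → g)
    (hP : ∀ ξ : g, ρ (ξ - P ξ) yhat = 0 ∧
      ∀ η : g, ρ η yhat = 0 → (inner ℝ (P ξ) η : ℝ) = 0) :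
    ∃ U : Set V, IsOpen U ∧ yhat ∈ U ∧
      ∃ c > (0 : ℝ), ∃ c' > (0 : ℝ), ∃ c'' > (0 : ℝ),
        ∀ ξ : g, ∀ x : V, x ≠ 0 → ‖x‖⁻¹ • x ∈ U →
          c * (‖x‖ * ‖P ξ‖) ≤ ‖ρ ξ x‖ ∧
          c' * ‖ρ (P ξ) x‖ ≤ ‖ρ ξ x‖ ∧
          c'' * (‖ρ (P ξ) x‖ + ‖ρ (ξ - P ξ) x‖) ≤ ‖ρ ξ x‖ := by
  classical
  -- operator norm bound
  obtain ⟨C, hC0, hC⟩ : ∃ C > (0:ℝ), ∀ ξ : g, ∀ v : V, ‖ρ ξ v‖ ≤ C * ‖ξ‖ * ‖v‖ := by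
    let ρ' : g →ₗ[ℝ] (V →L[ℂ] V) :=
      { toFun := fun ξ => (ρ ξ).toContinuousLinearMap
        map_add' := by intro a b; ext v; simp
        map_smul' := by intro a b; ext v; simp }
    refine ⟨‖ρ'.toContinuousLinearMap‖ + 1, by positivity, fun ξ v => ?_⟩
    have h1 : ‖ρ ξ v‖ = ‖(ρ'.toContinuousLinearMap ξ) v‖ := rfl
    calc ‖ρ ξ v‖ ≤ ‖ρ'.toContinuousLinearMap ξ‖ * ‖v‖ := by
          rw [h1]; exact (ρ'.toContinuousLinearMap ξ).le_opNorm v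
      _ ≤ (‖ρ'.toContinuousLinearMap‖ * ‖ξ‖) * ‖v‖ := by
          gcongr; exact ρ'.toContinuousLinearMap.le_opNorm ξ
      _ ≤ (‖ρ'.toContinuousLinearMap‖ + 1) * ‖ξ‖ * ‖v‖ := by
          gcongr; linarith
  -- the evaluation map at yhat
  let T : g →ₗ[ℝ] V :=
    { toFun := fun ξ => ρ ξ yhat
      map_add' := by intro a b; simp
      map_smul' := by intro a b; simp }
  -- lower bound on the orthogonal complement of the stabilizer
  obtain ⟨c₀, hc₀0, hc₀⟩ : ∃ c₀ > (0:ℝ), ∀ η ∈ (LinearMap.ker T)ᗮ,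
      c₀ * ‖η‖ ≤ ‖ρ η yhat‖ := by
    set K := (LinearMap.ker T)ᗮ
    have hinj' : LinearMap.ker (T.domRestrict K) = ⊥ := by
      rw [Submodule.eq_bot_iff]
      rintro ⟨η, hηK⟩ hη
      have h1 : η ∈ LinearMap.ker T := by
        simpa [LinearMap.mem_ker, LinearMap.domRestrict_apply] using hη
      have h2 : (inner ℝ η η : ℝ) = 0 := hηK η h1
      have : η = 0 := by rwa [inner_self_eq_zero] at h2
      simpa using this
    obtain ⟨K₁, hK₁0, hK₁⟩ := (T.domRestrict K).exists_antilipschitzWith hinj'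
    refine ⟨(K₁ : ℝ)⁻¹, by positivity, fun η hη => ?_⟩
    have h3 : ‖(⟨η, hη⟩ : K)‖ ≤ (K₁ : ℝ) * ‖T.domRestrict K ⟨η, hη⟩‖ :=
      hK₁.le_mul_norm (map_zero _) _
    have h4 : ‖(⟨η, hη⟩ : K)‖ = ‖η‖ := rfl
    have h5 : T.domRestrict K ⟨η, hη⟩ = ρ η yhat := rfl
    rw [h4, h5] at h3
    have hK₁0' : (0:ℝ) < (K₁ : ℝ) := by exact_mod_cast hK₁0
    rw [inv_mul_le_iff₀ hK₁0']
    linarith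
  -- P ξ lies in the orthogonal complement of the stabilizer
  have hPmem : ∀ ξ : g, P ξ ∈ (LinearMap.ker T)ᗮ := by
    intro ξ
    rw [Submodule.mem_orthogonal]
    intro u hu
    have hu' : ρ u yhat = 0 := by simpa [T, LinearMap.mem_ker] using hu
    rw [real_inner_comm]
    exact (hP ξ).2 u hu'
  have hcP : ∀ ξ : g, c₀ * ‖P ξ‖ ≤ ‖ρ (P ξ) yhat‖ := fun ξ => hc₀ _ (hPmem ξ)
  have hρy : ∀ ξ : g, ρ ξ yhat = ρ (P ξ) yhat := by
    intro ξ
    have h1 := (hP ξ).1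
    rw [map_sub, LinearMap.sub_apply] at h1
    exact sub_eq_zero.mp h1
  set r : ℝ := c₀ / (2 * C) with hr
  have hr0 : 0 < r := by positivity
  -- key estimate
  have key : ∀ ξ : g, ∀ z : V, ‖z - yhat‖ < r → ‖ρ (P ξ) yhat‖ ≤ 2 * ‖ρ ξ z‖ := by
    intro ξ z hz
    set w : V := ρ (P ξ) yhat with hw
    rcases eq_or_lt_of_le (norm_nonneg w) with h0 | h0
    · rw [← h0]; positivity
    have hsplit : ρ ξ z = w + ρ ξ (z - yhat) := by
      rw [map_sub, hρy ξ]; abel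
    have herr : ‖(inner ℂ (ρ ξ (z - yhat)) w : ℂ)‖ ≤ ‖w‖ ^ 2 / 2 := by
      have e1 : (inner ℂ (ρ ξ (z - yhat)) w : ℂ) = -(inner ℂ (z - yhat) (ρ ξ w) : ℂ) :=
        hskew ξ _ _
      have e2 : ρ ξ w = ρ (P ξ) w := by
        rw [hw, hcomm ξ (P ξ) yhat, ← hρy ξ, hρy ξ]
      have e3 : ‖(inner ℂ (z - yhat) (ρ (P ξ) w) : ℂ)‖ ≤ ‖z - yhat‖ * ‖ρ (P ξ) w‖ :=
        norm_inner_le_norm _ _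
      have e4 : ‖ρ (P ξ) w‖ ≤ C * ‖P ξ‖ * ‖w‖ := hC _ _
      have e5 : ‖P ξ‖ ≤ c₀⁻¹ * ‖w‖ := by
        have h6 := hcP ξ
        rw [inv_mul_eq_div, le_div_iff₀ hc₀0]
        calc ‖P ξ‖ * c₀ = c₀ * ‖P ξ‖ := by ring
          _ ≤ ‖(ρ (P ξ)) yhat‖ := h6
      have e6 : ‖z - yhat‖ ≤ r := le_of_lt hz
      calc ‖(inner ℂ (ρ ξ (z - yhat)) w : ℂ)‖
          = ‖(inner ℂ (z - yhat) (ρ ξ w) : ℂ)‖ := by rw [e1, norm_neg]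
        _ = ‖(inner ℂ (z - yhat) (ρ (P ξ) w) : ℂ)‖ := by rw [e2]
        _ ≤ ‖z - yhat‖ * ‖ρ (P ξ) w‖ := e3
        _ ≤ r * (C * (c₀⁻¹ * ‖w‖) * ‖w‖) := by
            have h7 : ‖ρ (P ξ) w‖ ≤ C * (c₀⁻¹ * ‖w‖) * ‖w‖ := by
              calc ‖ρ (P ξ) w‖ ≤ C * ‖P ξ‖ * ‖w‖ := e4
                _ ≤ C * (c₀⁻¹ * ‖w‖) * ‖w‖ := by gcongr
            exact mul_le_mul e6 h7 (norm_nonneg _) (le_of_lt hr0)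
        _ = ‖w‖ ^ 2 / 2 := by
            rw [hr]
            have hCne : C ≠ 0 := ne_of_gt hC0
            have hc₀ne : c₀ ≠ 0 := ne_of_gt hc₀0
            field_simp
    have hre : ‖w‖ ^ 2 / 2 ≤ (inner ℂ (ρ ξ z) w : ℂ).re := by
      have e7 : (inner ℂ (ρ ξ z) w : ℂ) = (inner ℂ w w : ℂ) + (inner ℂ (ρ ξ (z - yhat)) w : ℂ) := by
        rw [hsplit, inner_add_left]
      have e8 : (inner ℂ w w : ℂ).re = ‖w‖ ^ 2 := by
        rw [inner_self_eq_norm_sq_to_K]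
        simp [pow_two]
      have e9 : |(inner ℂ (ρ ξ (z - yhat)) w : ℂ).re| ≤ ‖w‖ ^ 2 / 2 := by
        calc |(inner ℂ (ρ ξ (z - yhat)) w : ℂ).re| ≤ ‖(inner ℂ (ρ ξ (z - yhat)) w : ℂ)‖ :=
              Complex.abs_re_le_norm _
          _ ≤ ‖w‖ ^ 2 / 2 := herr
      rw [e7, Complex.add_re, e8]
      have := abs_le.mp e9
      linarith [this.1]
    have hcs : (inner ℂ (ρ ξ z) w : ℂ).re ≤ ‖ρ ξ z‖ * ‖w‖ := by
      calc (inner ℂ (ρ ξ z) w : ℂ).re ≤ |(inner ℂ (ρ ξ z) w : ℂ).re| := le_abs_self _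
        _ ≤ ‖(inner ℂ (ρ ξ z) w : ℂ)‖ := Complex.abs_re_le_norm _
        _ ≤ ‖ρ ξ z‖ * ‖w‖ := norm_inner_le_norm _ _
    nlinarith [norm_nonneg (ρ ξ z)]
  -- assemble
  refine ⟨Metric.ball yhat r, Metric.isOpen_ball, by simpa using hr0, ?_⟩
  refine ⟨c₀ / 2, by positivity, c₀ / (2 * C), by positivity,
    (c₀ / (2 * C)) / (2 + c₀ / (2 * C)), by positivity, ?_⟩
  intro ξ x hx hxU
  have hx0 : (0:ℝ) < ‖x‖ := norm_pos_iff.mpr hx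
  set z : V := ‖x‖⁻¹ • x with hz
  have hzU : ‖z - yhat‖ < r := by
    rw [← dist_eq_norm]
    exact Metric.mem_ball.mp hxU
  have hzx : ‖ρ ξ z‖ = ‖x‖⁻¹ * ‖ρ ξ x‖ := by
    rw [hz, LinearMap.map_smul_of_tower, norm_smul, Real.norm_eq_abs,
      abs_of_pos (inv_pos.mpr hx0)]
  have hkey := key ξ z hzU
  rw [hzx] at hkey
  have h1 : c₀ * ‖P ξ‖ ≤ 2 * (‖x‖⁻¹ * ‖ρ ξ x‖) := le_trans (hcP ξ) hkey
  have hi : c₀ / 2 * (‖x‖ * ‖P ξ‖) ≤ ‖ρ ξ x‖ := by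
    have h2 : ‖x‖ * (c₀ * ‖P ξ‖) ≤ ‖x‖ * (2 * (‖x‖⁻¹ * ‖ρ ξ x‖)) := by
      gcongr
    have h3 : ‖x‖ * (2 * (‖x‖⁻¹ * ‖ρ ξ x‖)) = 2 * ‖ρ ξ x‖ := by
      have h4 : ‖x‖ * ‖x‖⁻¹ = 1 := mul_inv_cancel₀ (ne_of_gt hx0)
      calc ‖x‖ * (2 * (‖x‖⁻¹ * ‖ρ ξ x‖)) = ‖x‖ * ‖x‖⁻¹ * (2 * ‖ρ ξ x‖) := by ring
        _ = 2 * ‖ρ ξ x‖ := by rw [h4]; ring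
    rw [h3] at h2
    nlinarith
  have hPx : ‖ρ (P ξ) x‖ ≤ C * ‖P ξ‖ * ‖x‖ := hC _ _
  have hii : c₀ / (2 * C) * ‖ρ (P ξ) x‖ ≤ ‖ρ ξ x‖ := by
    have h3 : c₀ / (2 * C) * ‖ρ (P ξ) x‖ ≤ c₀ / (2 * C) * (C * ‖P ξ‖ * ‖x‖) := by
      gcongr
    have h4 : c₀ / (2 * C) * (C * ‖P ξ‖ * ‖x‖) = c₀ / 2 * (‖x‖ * ‖P ξ‖) := by
      have hCne : C ≠ 0 := ne_of_gt hC0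
      field_simp
    linarith [hi]
  have hQx : ‖ρ (ξ - P ξ) x‖ ≤ ‖ρ ξ x‖ + ‖ρ (P ξ) x‖ := by
    rw [map_sub, LinearMap.sub_apply]
    exact norm_sub_le _ _
  refine ⟨hi, hii, ?_⟩
  set c' : ℝ := c₀ / (2 * C) with hc'
  have hc'0 : 0 < c' := by positivity
  have h5 : ‖ρ (P ξ) x‖ + ‖ρ (ξ - P ξ) x‖ ≤ (2 / c' + 1) * ‖ρ ξ x‖ := by
    have h6 : ‖ρ (P ξ) x‖ ≤ (1 / c') * ‖ρ ξ x‖ := by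
      rw [div_mul_eq_mul_div, le_div_iff₀ hc'0]
      calc ‖ρ (P ξ) x‖ * c' = c' * ‖ρ (P ξ) x‖ := by ring
        _ ≤ ‖ρ ξ x‖ := hii
        _ = 1 * ‖ρ ξ x‖ := by ring
    have h7 : (2 / c' + 1) * ‖ρ ξ x‖ = 2 * (1 / c' * ‖ρ ξ x‖) + ‖ρ ξ x‖ := by ring
    rw [h7]
    linarith [hQx, h6]
  rw [div_mul_eq_mul_div, div_le_iff₀ (by positivity)]
  calc c' * (‖ρ (P ξ) x‖ + ‖ρ (ξ - P ξ) x‖) ≤ c' * ((2 / c' + 1) * ‖ρ ξ x‖) := by gcongr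
    _ = ‖ρ ξ x‖ * (2 + c') := by field_simp
end

section
/- Let X be a set, E a finite-dimensional real inner product space, μ : X → E a map, f = ‖μ‖², and g : X → ℝ any function. Fix f_c ≥ 0. Suppose that for every μ_c ∈ E with ‖μ_c‖² = f_c there exist constants ε' > 0 and c' > 0 (depending on μ_c) such that g(x) ≥ c'·|f(x) − f_c|^{3/4} for all x with ‖μ(x) − μ_c‖ < ε'. Then there exist constants ε > 0 and c > 0 such that g(x) ≥ c·|f(x) − f_c|^{3/4} for all x with |f(x) − f_c| < ε. -/
/-- Key elementary estimate: for `a, r ≥ 0`, `|a - r|² ≤ |a² - r²|`. -/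
lemma abs_sub_sq_le_abs_sq_sub_sq {a r : ℝ} (ha : 0 ≤ a) (hr : 0 ≤ r) :
    |a - r| ^ 2 ≤ |a ^ 2 - r ^ 2| := by
  have h1 : |a - r| ≤ a + r := by
    cases abs_cases (a - r) with
    | inl h => linarith [h.1]
    | inr h => linarith [h.1]
  calc |a - r| ^ 2 = |a - r| * |a - r| := by ring
    _ ≤ |a - r| * (a + r) := mul_le_mul_of_nonneg_left h1 (abs_nonneg _)
    _ = |(a - r) * (a + r)| := by
        rw [abs_mul, abs_of_nonneg (by positivity : (0:ℝ) ≤ a + r)]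
    _ = |a ^ 2 - r ^ 2| := by ring_nf

/-- **Compactness patching step for the global Łojasiewicz inequality.** -/
theorem stmt_8
    {X : Type*} {E : Type*} [NormedAddCommGroup E] [InnerProductSpace ℝ E]
    [FiniteDimensional ℝ E]
    (μ : X → E) (f : X → ℝ) (hf : ∀ x, f x = ‖μ x‖ ^ 2)
    (g : X → ℝ) (fc : ℝ) (hfc : 0 ≤ fc)
    (H : ∀ μc : E, ‖μc‖ ^ 2 = fc → ∃ ε' > (0 : ℝ), ∃ c' > (0 : ℝ),
      ∀ x : X, ‖μ x - μc‖ < ε' → c' * |f x - fc| ^ (3 / 4 : ℝ) ≤ g x) :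
    ∃ ε > (0 : ℝ), ∃ c > (0 : ℝ), ∀ x : X, |f x - fc| < ε →
      c * |f x - fc| ^ (3 / 4 : ℝ) ≤ g x := by
  by_cases hex : ∃ p : E, ‖p‖ = Real.sqrt fc
  · -- Main case: the sphere is nonempty.
    obtain ⟨p₀, hp₀⟩ := hex
    -- restate H without the side condition, so `choose` gives plain functions
    have H' : ∀ p : E, ∃ ε' > (0 : ℝ), ∃ c' > (0 : ℝ),
        ∀ x : X, ‖p‖ ^ 2 = fc → ‖μ x - p‖ < ε' → c' * |f x - fc| ^ (3 / 4 : ℝ) ≤ g x := by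
      intro p
      by_cases hp : ‖p‖ ^ 2 = fc
      · obtain ⟨ε', hε', c', hc', hb⟩ := H p hp
        exact ⟨ε', hε', c', hc', fun x _ hx => hb x hx⟩
      · exact ⟨1, one_pos, 1, one_pos, fun x hp' _ => absurd hp' hp⟩
    choose ε' hε' c' hc' hb using H'
    -- the sphere of radius √fc
    set S : Set E := Metric.sphere (0 : E) (Real.sqrt fc) with hS
    have hScpt : IsCompact S := isCompact_sphere 0 _
    have hSsq : ∀ p ∈ S, ‖p‖ ^ 2 = fc := by
      intro p hp
      have : ‖p‖ = Real.sqrt fc := mem_sphere_zero_iff_norm.1 hp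
      rw [this, Real.sq_sqrt hfc]
    obtain ⟨t, htS, hcover⟩ := hScpt.elim_nhds_subcover
      (fun p => Metric.ball p (ε' p / 2))
      (fun p _ => Metric.ball_mem_nhds p (by linarith [hε' p]))
    have hp₀S : p₀ ∈ S := by simpa [hS] using hp₀
    have htne : t.Nonempty := by
      rcases Set.mem_iUnion₂.1 (hcover hp₀S) with ⟨q, hq, _⟩
      exact ⟨q, hq⟩
    set δ : ℝ := t.inf' htne (fun p => ε' p / 2) with hδ
    have hδpos : 0 < δ := by
      rw [hδ, Finset.lt_inf'_iff]
      exact fun p _ => by linarith [hε' p]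
    set c : ℝ := t.inf' htne c' with hc
    have hcpos : 0 < c := by
      rw [hc, Finset.lt_inf'_iff]
      exact fun p _ => hc' p
    refine ⟨δ ^ 2, by positivity, c, hcpos, fun x hx => ?_⟩
    -- find a point q on the sphere close to μ x
    have hkey : ∃ q ∈ S, ‖μ x - q‖ < δ := by
      by_cases hμ : μ x = 0
      · refine ⟨p₀, hp₀S, ?_⟩
        have hfx : f x = 0 := by rw [hf x, hμ]; simp
        have hfc' : fc < δ ^ 2 := by
          have := hx; rw [hfx] at this; simpa [abs_of_nonneg hfc] using this
        have : Real.sqrt fc < Real.sqrt (δ ^ 2) := Real.sqrt_lt_sqrt hfc hfc'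
        rw [Real.sqrt_sq hδpos.le] at this
        simpa [hμ, hp₀] using this
      · set q : E := (Real.sqrt fc / ‖μ x‖) • μ x with hq
        have hnμ : (0:ℝ) < ‖μ x‖ := norm_pos_iff.2 hμ
        have hqn : ‖q‖ = Real.sqrt fc := by
          rw [hq, norm_smul, Real.norm_eq_abs,
            abs_of_nonneg (by positivity : (0:ℝ) ≤ Real.sqrt fc / ‖μ x‖)]
          field_simp
        refine ⟨q, by simpa [hS] using hqn, ?_⟩
        have hdist : ‖μ x - q‖ = |‖μ x‖ - Real.sqrt fc| := by
          have : μ x - q = (1 - Real.sqrt fc / ‖μ x‖) • μ x := by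
            rw [hq]; module
          rw [this, norm_smul, Real.norm_eq_abs]
          rw [show (1 - Real.sqrt fc / ‖μ x‖) = (‖μ x‖ - Real.sqrt fc) / ‖μ x‖ by
            field_simp]
          rw [abs_div, abs_of_nonneg hnμ.le]
          field_simp
        rw [hdist]
        have h2 : |‖μ x‖ - Real.sqrt fc| ^ 2 ≤ |f x - fc| := by
          have := abs_sub_sq_le_abs_sq_sub_sq (norm_nonneg (μ x)) (Real.sqrt_nonneg fc)
          rwa [Real.sq_sqrt hfc, ← hf x] at this
        have h3 : |‖μ x‖ - Real.sqrt fc| ^ 2 < δ ^ 2 := lt_of_le_of_lt h2 hx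
        exact lt_of_pow_lt_pow_left₀ 2 hδpos.le h3
    obtain ⟨q, hqS, hqclose⟩ := hkey
    rcases Set.mem_iUnion₂.1 (hcover hqS) with ⟨p, hpt, hqp⟩
    have hδle : δ ≤ ε' p / 2 := Finset.inf'_le _ hpt
    have hqp' : ‖q - p‖ < ε' p / 2 := by
      simpa [dist_eq_norm] using hqp
    have hxp : ‖μ x - p‖ < ε' p := by
      calc ‖μ x - p‖ ≤ ‖μ x - q‖ + ‖q - p‖ := norm_sub_le_norm_sub_add_norm_sub _ _ _
        _ < δ + ε' p / 2 := add_lt_add hqclose hqp'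
        _ ≤ ε' p / 2 + ε' p / 2 := by linarith
        _ = ε' p := by ring
    have hgb := hb p x (hSsq p (htS p hpt)) hxp
    have hcle : c ≤ c' p := Finset.inf'_le _ hpt
    calc c * |f x - fc| ^ (3 / 4 : ℝ)
        ≤ c' p * |f x - fc| ^ (3 / 4 : ℝ) := by
          apply mul_le_mul_of_nonneg_right hcle (Real.rpow_nonneg (abs_nonneg _) _)
      _ ≤ g x := hgb
  · -- Degenerate case: no point of norm √fc; then fc > 0 and the claim is vacuous.
    have hfc0 : 0 < fc := by
      rcases lt_or_eq_of_le hfc with h | h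
      · exact h
      · exact absurd ⟨0, by simp [← h]⟩ hex
    refine ⟨fc / 2, by linarith, 1, one_pos, fun x hx => ?_⟩
    exfalso
    have hnμ : (0:ℝ) < ‖μ x‖ := by
      have : fc / 2 < f x := by
        cases abs_cases (f x - fc) with
        | inl h => linarith [h.1]
        | inr h => linarith [h.1, hx]
      rw [hf x] at this
      nlinarith [norm_nonneg (μ x)]
    apply hex
    refine ⟨(Real.sqrt fc / ‖μ x‖) • μ x, ?_⟩
    rw [norm_smul, Real.norm_eq_abs,
      abs_of_nonneg (by positivity : (0:ℝ) ≤ Real.sqrt fc / ‖μ x‖)]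
    field_simp
end

section
/- Define μ_I = μ_r, μ_J(x,y) = Re μ_c(x,y) ∈ ℝʳ and μ_K(x,y) = Im μ_c(x,y) ∈ ℝʳ (real and imaginary parts taken componentwise), and set f_I = ‖μ_I‖², f_J = ‖μ_J‖², f_K = ‖μ_K‖². Then at every point of ℂᴺ × ℂᴺ the gradients of these three functions are pairwise orthogonal: ⟨∇f_I, ∇f_J⟩ = ⟨∇f_I, ∇f_K⟩ = ⟨∇f_J, ∇f_K⟩ = 0. -/
noncomputable section

lemma aux_normsq {ι : Type*} [Fintype ι] [DecidableEq ι]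
    (z : EuclideanSpace ℂ ι) (b : ι) :
    ∃ L : EuclideanSpace ℂ ι →L[ℝ] ℝ,
      HasFDerivAt (fun w : EuclideanSpace ℂ ι => ‖w b‖ ^ 2) L z ∧
      ∀ v : EuclideanSpace ℂ ι, L v = 2 * ((starRingEnd ℂ) (z b) * v b).re := by
  have hproj : HasFDerivAt (fun w : EuclideanSpace ℂ ι => w b)
      ((EuclideanSpace.proj b : EuclideanSpace ℂ ι →L[ℂ] ℂ).restrictScalars ℝ) z :=
    (EuclideanSpace.proj b (𝕜 := ℂ)).hasFDerivAt.restrictScalars ℝ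
  have hinner := hproj.inner ℂ hproj
  have hre := (Complex.reCLM.hasFDerivAt (x := (inner ℂ (z b) (z b) : ℂ))).comp z hinner
  refine ⟨Complex.reCLM.comp ((fderivInnerCLM ℂ (z b, z b)).comp
      (((EuclideanSpace.proj b (𝕜 := ℂ)).restrictScalars ℝ).prod
        ((EuclideanSpace.proj b (𝕜 := ℂ)).restrictScalars ℝ))), ?_, ?_⟩
  · have heq : (fun w : EuclideanSpace ℂ ι => ‖w b‖ ^ 2)
        = (Complex.reCLM ∘ fun w : EuclideanSpace ℂ ι => (inner ℂ (w b) (w b) : ℂ)) :=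
      funext fun w => (inner_self_eq_norm_sq (𝕜 := ℂ) (w b)).symm
    rw [heq]; exact hre
  · intro v
    simp [fderivInnerCLM_apply, RCLike.inner_apply, Complex.mul_re]
    ring

lemma aux_mul {ι : Type*} [Fintype ι] [DecidableEq ι]
    (z : EuclideanSpace ℂ ι) (b c : ι) :
    ∃ L : EuclideanSpace ℂ ι →L[ℝ] ℂ,
      HasFDerivAt (fun w : EuclideanSpace ℂ ι => w b * w c) L z ∧
      ∀ v : EuclideanSpace ℂ ι, L v = v b * z c + z b * v c := by
  have h := ((EuclideanSpace.proj b (𝕜 := ℂ)).hasFDerivAt (x := z)).mul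
    ((EuclideanSpace.proj c (𝕜 := ℂ)).hasFDerivAt (x := z))
  refine ⟨_, h.restrictScalars ℝ, fun v => ?_⟩
  simp
  ring

/-- **Pairwise orthogonality of the gradients of the three hyperkähler moment map
norm-squares for a torus action (Lemma `CrossTermVanish`).**  On
`T*ℂᴺ = ℂᴺ × ℂᴺ` (modelled as `EuclideanSpace ℂ (Fin N ⊕ Fin N)`, with
`x j = z (Sum.inl j)`, `y j = z (Sum.inr j)`), let `μ_I = μ_r`,
`μ_J = Re μ_c`, `μ_K = Im μ_c`, and `f_I = ‖μ_I‖²`, `f_J = ‖μ_J‖²`, `f_K = ‖μ_K‖²`.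
Then at every point the real inner products of the gradients of `f_I, f_J, f_K`
vanish pairwise. -/
theorem stmt_9
    (N r : ℕ) (β : Fin N → Fin r → ℝ)
    (αR : EuclideanSpace ℝ (Fin r)) (αC : EuclideanSpace ℂ (Fin r))
    (μr : EuclideanSpace ℂ (Fin N ⊕ Fin N) → EuclideanSpace ℝ (Fin r))
    (hμr : ∀ z : EuclideanSpace ℂ (Fin N ⊕ Fin N), ∀ a : Fin r,
      μr z a = (1 / 2 : ℝ) * (∑ j, (‖z (Sum.inl j)‖ ^ 2 - ‖z (Sum.inr j)‖ ^ 2) * β j a)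
        - αR a)
    (μc : EuclideanSpace ℂ (Fin N ⊕ Fin N) → EuclideanSpace ℂ (Fin r))
    (hμc : ∀ z : EuclideanSpace ℂ (Fin N ⊕ Fin N), ∀ a : Fin r,
      μc z a = (∑ j, z (Sum.inl j) * z (Sum.inr j) * (β j a : ℂ)) - αC a)
    (μJ μK : EuclideanSpace ℂ (Fin N ⊕ Fin N) → EuclideanSpace ℝ (Fin r))
    (hμJ : ∀ z a, μJ z a = (μc z a).re)
    (hμK : ∀ z a, μK z a = (μc z a).im)
    (fI fJ fK : EuclideanSpace ℂ (Fin N ⊕ Fin N) → ℝ)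
    (hfI : ∀ z, fI z = ‖μr z‖ ^ 2)
    (hfJ : ∀ z, fJ z = ‖μJ z‖ ^ 2)
    (hfK : ∀ z, fK z = ‖μK z‖ ^ 2)
    (z : EuclideanSpace ℂ (Fin N ⊕ Fin N)) :
    (inner ℝ (gradient fI z) (gradient fJ z) : ℝ) = 0 ∧
    (inner ℝ (gradient fI z) (gradient fK z) : ℝ) = 0 ∧
    (inner ℝ (gradient fJ z) (gradient fK z) : ℝ) = 0 := by
  classical
  choose Lsq hLsq hLsqv using fun b : Fin N ⊕ Fin N => aux_normsq z b
  choose Lm hLm hLmv using fun j : Fin N => aux_mul z (Sum.inl j) (Sum.inr j)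
  -- the I-gradient
  set MI : Fin r → (EuclideanSpace ℂ (Fin N ⊕ Fin N) →L[ℝ] ℝ) :=
    fun a => (1/2 : ℝ) • ∑ j, β j a • (Lsq (Sum.inl j) - Lsq (Sum.inr j)) with hMIdef
  have hMI : ∀ a : Fin r, HasFDerivAt (fun w => μr w a) (MI a) z := by
    intro a
    have h : HasFDerivAt (fun w : EuclideanSpace ℂ (Fin N ⊕ Fin N) =>
        (1/2 : ℝ) * (∑ j, (‖w (Sum.inl j)‖^2 - ‖w (Sum.inr j)‖^2) * β j a) - αR a)
        (MI a) z :=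
      ((HasFDerivAt.fun_sum fun j _ =>
        ((hLsq (Sum.inl j)).sub (hLsq (Sum.inr j))).mul_const (β j a)).const_mul
          (1/2 : ℝ)).sub_const (αR a)
    exact h.congr_of_eventuallyEq (Filter.Eventually.of_forall fun w => hμr w a)
  have hfIeq : fI = fun w => ∑ a, μr w a * μr w a := funext fun w => by
    rw [hfI, ← real_inner_self_eq_norm_sq]
    simp only [PiLp.inner_apply, RCLike.inner_apply, conj_trivial]
  have hDI : HasFDerivAt fI (∑ a, (μr z a • MI a + μr z a • MI a)) z := by
    rw [hfIeq]; exact HasFDerivAt.fun_sum fun a _ => (hMI a).mul (hMI a)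
  set gI : EuclideanSpace ℂ (Fin N ⊕ Fin N) := WithLp.toLp 2 fun b =>
    Sum.elim (fun j => ((2 * ∑ a, μr z a * β j a : ℝ) : ℂ) * z (Sum.inl j))
      (fun j => -((2 * ∑ a, μr z a * β j a : ℝ) : ℂ) * z (Sum.inr j)) b with hgIdef
  have hgradI : HasGradientAt fI gI z := by
    rw [hasGradientAt_iff_hasFDerivAt]
    have heq : (InnerProductSpace.toDual ℝ _) gI = ∑ a, (μr z a • MI a + μr z a • MI a) :=
      ContinuousLinearMap.ext fun v => by
        simp only [InnerProductSpace.toDual_apply_apply, PiLp.inner_apply, Complex.inner,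
          ContinuousLinearMap.sum_apply, ContinuousLinearMap.add_apply,
          ContinuousLinearMap.smul_apply, smul_eq_mul, hMIdef, hgIdef,
          ContinuousLinearMap.sub_apply, hLsqv, Fintype.sum_sum_type,
          Sum.elim_inl, Sum.elim_inr, PiLp.toLp_apply]
        conv_lhs => simp only [mul_comm (v.ofLp _)]
        calc (∑ j : Fin N, ((starRingEnd ℂ) (((2 * ∑ a : Fin r, μr z a * β j a : ℝ) : ℂ) * z (Sum.inl j)) * v (Sum.inl j)).re)
              + ∑ j : Fin N, ((starRingEnd ℂ) (-((2 * ∑ a : Fin r, μr z a * β j a : ℝ) : ℂ) * z (Sum.inr j)) * v (Sum.inr j)).re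
            = ∑ j : Fin N, ∑ a : Fin r, (2 * (μr z a * β j a)) *
                (((starRingEnd ℂ) (z (Sum.inl j)) * v (Sum.inl j)).re
                  - ((starRingEnd ℂ) (z (Sum.inr j)) * v (Sum.inr j)).re) := by
              rw [← Finset.sum_add_distrib]
              refine Finset.sum_congr rfl fun j _ => ?_
              rw [← Finset.sum_mul, ← Finset.mul_sum]
              simp [map_mul, map_neg, Complex.conj_ofReal, Complex.mul_re, Complex.mul_im]
              ring
          _ = ∑ a : Fin r, ∑ j : Fin N, (2 * (μr z a * β j a)) *
                (((starRingEnd ℂ) (z (Sum.inl j)) * v (Sum.inl j)).re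
                  - ((starRingEnd ℂ) (z (Sum.inr j)) * v (Sum.inr j)).re) := Finset.sum_comm
          _ = _ := by
              refine Finset.sum_congr rfl fun a _ => ?_
              simp only [Finset.mul_sum, ← Finset.sum_add_distrib]
              exact Finset.sum_congr rfl fun j _ => by ring
    rw [heq]; exact hDI
  -- the J-gradient
  set MJ : Fin r → (EuclideanSpace ℂ (Fin N ⊕ Fin N) →L[ℝ] ℝ) :=
    fun a => ∑ j, Complex.reCLM.comp (((β j a : ℂ)) • Lm j) with hMJdef
  have hMJ : ∀ a : Fin r, HasFDerivAt (fun w => μJ w a) (MJ a) z := by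
    intro a
    have h : HasFDerivAt (fun w : EuclideanSpace ℂ (Fin N ⊕ Fin N) =>
        (∑ j, ((w (Sum.inl j) * w (Sum.inr j)) * (β j a : ℂ)).re) - (αC a).re)
        (MJ a) z := by
      refine HasFDerivAt.sub_const _ ?_
      exact HasFDerivAt.fun_sum fun j _ =>
        (Complex.reCLM.hasFDerivAt).comp z ((hLm j).mul_const ((β j a : ℂ)))
    refine h.congr_of_eventuallyEq (Filter.Eventually.of_forall fun w => ?_)
    show μJ w a = _
    rw [hμJ, hμc]
    simp [Complex.sub_re]
  have hfJeq : fJ = fun w => ∑ a, μJ w a * μJ w a := funext fun w => by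
    rw [hfJ, ← real_inner_self_eq_norm_sq]
    simp only [PiLp.inner_apply, RCLike.inner_apply, conj_trivial]
  have hDJ : HasFDerivAt fJ (∑ a, (μJ z a • MJ a + μJ z a • MJ a)) z := by
    rw [hfJeq]; exact HasFDerivAt.fun_sum fun a _ => (hMJ a).mul (hMJ a)
  set gJ : EuclideanSpace ℂ (Fin N ⊕ Fin N) := WithLp.toLp 2 fun b =>
    Sum.elim
      (fun j => ((2 * ∑ a, μJ z a * β j a : ℝ) : ℂ) * (starRingEnd ℂ) (z (Sum.inr j)))
      (fun j => ((2 * ∑ a, μJ z a * β j a : ℝ) : ℂ) * (starRingEnd ℂ) (z (Sum.inl j))) b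
      with hgJdef
  have hgradJ : HasGradientAt fJ gJ z := by
    rw [hasGradientAt_iff_hasFDerivAt]
    have heq : (InnerProductSpace.toDual ℝ _) gJ = ∑ a, (μJ z a • MJ a + μJ z a • MJ a) :=
      ContinuousLinearMap.ext fun v => by
        simp only [InnerProductSpace.toDual_apply_apply, PiLp.inner_apply, Complex.inner,
          ContinuousLinearMap.sum_apply, ContinuousLinearMap.add_apply,
          ContinuousLinearMap.smul_apply, smul_eq_mul, hMJdef, hgJdef,
          ContinuousLinearMap.comp_apply, hLmv, Fintype.sum_sum_type,
          Sum.elim_inl, Sum.elim_inr, PiLp.toLp_apply, Complex.reCLM_apply]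
        conv_lhs => simp only [mul_comm (v.ofLp _)]
        calc (∑ j : Fin N, ((starRingEnd ℂ) (((2 * ∑ a : Fin r, μJ z a * β j a : ℝ) : ℂ) * (starRingEnd ℂ) (z (Sum.inr j))) * v (Sum.inl j)).re)
              + ∑ j : Fin N, ((starRingEnd ℂ) (((2 * ∑ a : Fin r, μJ z a * β j a : ℝ) : ℂ) * (starRingEnd ℂ) (z (Sum.inl j))) * v (Sum.inr j)).re
            = ∑ j : Fin N, ∑ a : Fin r, (2 * (μJ z a * β j a)) *
                (v (Sum.inl j) * z (Sum.inr j) + z (Sum.inl j) * v (Sum.inr j)).re := by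
              rw [← Finset.sum_add_distrib]
              refine Finset.sum_congr rfl fun j _ => ?_
              rw [← Finset.sum_mul, ← Finset.mul_sum]
              simp [map_mul, Complex.conj_ofReal, Complex.mul_re, Complex.mul_im,
                Complex.add_re, Complex.add_im]
              ring
          _ = ∑ a : Fin r, ∑ j : Fin N, (2 * (μJ z a * β j a)) *
                (v (Sum.inl j) * z (Sum.inr j) + z (Sum.inl j) * v (Sum.inr j)).re :=
              Finset.sum_comm
          _ = _ := by
              refine Finset.sum_congr rfl fun a _ => ?_
              simp only [Finset.mul_sum, ← Finset.sum_add_distrib]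
              refine Finset.sum_congr rfl fun j _ => ?_
              simp [Complex.re_ofReal_mul]
              ring
    rw [heq]; exact hDJ
  -- the K-gradient
  set MK : Fin r → (EuclideanSpace ℂ (Fin N ⊕ Fin N) →L[ℝ] ℝ) :=
    fun a => ∑ j, Complex.imCLM.comp (((β j a : ℂ)) • Lm j) with hMKdef
  have hMK : ∀ a : Fin r, HasFDerivAt (fun w => μK w a) (MK a) z := by
    intro a
    have h : HasFDerivAt (fun w : EuclideanSpace ℂ (Fin N ⊕ Fin N) =>
        (∑ j, ((w (Sum.inl j) * w (Sum.inr j)) * (β j a : ℂ)).im) - (αC a).im)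
        (MK a) z := by
      refine HasFDerivAt.sub_const _ ?_
      exact HasFDerivAt.fun_sum fun j _ =>
        (Complex.imCLM.hasFDerivAt).comp z ((hLm j).mul_const ((β j a : ℂ)))
    refine h.congr_of_eventuallyEq (Filter.Eventually.of_forall fun w => ?_)
    show μK w a = _
    rw [hμK, hμc]
    simp [Complex.sub_im]
  have hfKeq : fK = fun w => ∑ a, μK w a * μK w a := funext fun w => by
    rw [hfK, ← real_inner_self_eq_norm_sq]
    simp only [PiLp.inner_apply, RCLike.inner_apply, conj_trivial]
  have hDK : HasFDerivAt fK (∑ a, (μK z a • MK a + μK z a • MK a)) z := by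
    rw [hfKeq]; exact HasFDerivAt.fun_sum fun a _ => (hMK a).mul (hMK a)
  set gK : EuclideanSpace ℂ (Fin N ⊕ Fin N) := WithLp.toLp 2 fun b =>
    Sum.elim
      (fun j => ((2 * ∑ a, μK z a * β j a : ℝ) : ℂ) * (Complex.I * (starRingEnd ℂ) (z (Sum.inr j))))
      (fun j => ((2 * ∑ a, μK z a * β j a : ℝ) : ℂ) * (Complex.I * (starRingEnd ℂ) (z (Sum.inl j)))) b
      with hgKdef
  have hgradK : HasGradientAt fK gK z := by
    rw [hasGradientAt_iff_hasFDerivAt]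
    have heq : (InnerProductSpace.toDual ℝ _) gK = ∑ a, (μK z a • MK a + μK z a • MK a) :=
      ContinuousLinearMap.ext fun v => by
        simp only [InnerProductSpace.toDual_apply_apply, PiLp.inner_apply, Complex.inner,
          ContinuousLinearMap.sum_apply, ContinuousLinearMap.add_apply,
          ContinuousLinearMap.smul_apply, smul_eq_mul, hMKdef, hgKdef,
          ContinuousLinearMap.comp_apply, hLmv, Fintype.sum_sum_type,
          Sum.elim_inl, Sum.elim_inr, PiLp.toLp_apply, Complex.imCLM_apply]
        conv_lhs => simp only [mul_comm (v.ofLp _)]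
        calc (∑ j : Fin N, ((starRingEnd ℂ) (((2 * ∑ a : Fin r, μK z a * β j a : ℝ) : ℂ) * (Complex.I * (starRingEnd ℂ) (z (Sum.inr j)))) * v (Sum.inl j)).re)
              + ∑ j : Fin N, ((starRingEnd ℂ) (((2 * ∑ a : Fin r, μK z a * β j a : ℝ) : ℂ) * (Complex.I * (starRingEnd ℂ) (z (Sum.inl j)))) * v (Sum.inr j)).re
            = ∑ j : Fin N, ∑ a : Fin r, (2 * (μK z a * β j a)) *
                (v (Sum.inl j) * z (Sum.inr j) + z (Sum.inl j) * v (Sum.inr j)).im := by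
              rw [← Finset.sum_add_distrib]
              refine Finset.sum_congr rfl fun j _ => ?_
              rw [← Finset.sum_mul, ← Finset.mul_sum]
              simp [map_mul, Complex.conj_ofReal, Complex.mul_re, Complex.mul_im,
                Complex.add_re, Complex.add_im]
              ring
          _ = ∑ a : Fin r, ∑ j : Fin N, (2 * (μK z a * β j a)) *
                (v (Sum.inl j) * z (Sum.inr j) + z (Sum.inl j) * v (Sum.inr j)).im :=
              Finset.sum_comm
          _ = _ := by
              refine Finset.sum_congr rfl fun a _ => ?_
              simp only [Finset.mul_sum, ← Finset.sum_add_distrib]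
              refine Finset.sum_congr rfl fun j _ => ?_
              simp [Complex.im_ofReal_mul]
              ring
    rw [heq]; exact hDK
  -- conclude
  rw [hgradI.gradient, hgradJ.gradient, hgradK.gradient]
  refine ⟨?_, ?_, ?_⟩
  · simp only [PiLp.inner_apply, Complex.inner, Fintype.sum_sum_type, hgIdef, hgJdef,
      Sum.elim_inl, Sum.elim_inr, PiLp.toLp_apply]
    rw [← Finset.sum_add_distrib]
    refine Finset.sum_eq_zero fun j _ => ?_
    simp [map_mul, map_neg, Complex.conj_ofReal, Complex.mul_re, Complex.mul_im]
    ring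
  · simp only [PiLp.inner_apply, Complex.inner, Fintype.sum_sum_type, hgIdef, hgKdef,
      Sum.elim_inl, Sum.elim_inr, PiLp.toLp_apply]
    rw [← Finset.sum_add_distrib]
    refine Finset.sum_eq_zero fun j _ => ?_
    simp [map_mul, map_neg, Complex.conj_ofReal, Complex.mul_re, Complex.mul_im]
    ring
  · simp only [PiLp.inner_apply, Complex.inner, Fintype.sum_sum_type, hgJdef, hgKdef,
      Sum.elim_inl, Sum.elim_inr, PiLp.toLp_apply]
    rw [← Finset.sum_add_distrib]
    refine Finset.sum_eq_zero fun j _ => ?_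
    simp [map_mul, Complex.conj_ofReal, Complex.mul_re, Complex.mul_im]
    ring
end
end

section
/- (Macaulay/Fourier duality.) Let I ⊆ R be a homogeneous ideal such that S = R/I is finite-dimensional over k, and let S^∨ = {g ∈ R^∨ : D_f g = 0 for all f ∈ I} be its Fourier dual. Then S^∨ is a finitely generated R-submodule of R^∨ and ann_R(S^∨) = I; that is, a polynomial f ∈ R lies in I if and only if D_f g = 0 for every polynomial g that is annihilated by all elements of I. -/
open MvPolynomial

/-- The differential operator associated to a monomial `m`: the composition of the
partial derivatives `∂/∂λᵢ` iterated `m i` times. -/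
noncomputable def Dmon {k : Type*} [CommSemiring k] {n : ℕ} (m : Fin n →₀ ℕ) :
    Module.End k (MvPolynomial (Fin n) k) :=
  (List.ofFn fun i : Fin n =>
    ((pderiv i).toLinearMap : Module.End k (MvPolynomial (Fin n) k)) ^ m i).prod

/-- The constant-coefficient differential operator `D_f` obtained from a polynomial `f`
by substituting `∂/∂λᵢ` for `Xᵢ`. -/
noncomputable def Dop {k : Type*} [CommSemiring k] {n : ℕ}
    (f : MvPolynomial (Fin n) k) : Module.End k (MvPolynomial (Fin n) k) :=
  ∑ m ∈ f.support, MvPolynomial.coeff m f • Dmon m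

namespace MacaulayAux

lemma list_ofFn_prod_mul {M : Type*} [Monoid M] : ∀ {n : ℕ} (f g : Fin n → M),
    (∀ i j, Commute (f i) (g j)) →
    (List.ofFn fun i => f i * g i).prod = (List.ofFn f).prod * (List.ofFn g).prod := by
  intro n
  induction n with
  | zero => intro f g _; simp
  | succ n ih =>
    intro f g h
    rw [List.ofFn_succ, List.ofFn_succ (f := f), List.ofFn_succ (f := g)]
    simp only [List.prod_cons, Function.comp]
    rw [ih (fun i => f i.succ) (fun i => g i.succ) (fun i j => h _ _)]
    have hc : Commute (g 0) (List.ofFn fun i : Fin n => f i.succ).prod := by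
      apply Commute.list_prod_right
      intro x hx
      rw [List.mem_ofFn] at hx
      obtain ⟨i, rfl⟩ := hx
      exact (h i.succ 0).symm
    exact hc.mul_mul_mul_comm _ _

lemma list_ofFn_prod_single {M : Type*} [Monoid M] : ∀ {n : ℕ} (i : Fin n) (x : M),
    (List.ofFn fun j => if j = i then x else 1).prod = x := by
  intro n
  induction n with
  | zero => exact fun i => i.elim0
  | succ n ih =>
    intro i x
    rw [List.ofFn_succ]
    induction i using Fin.cases with
    | zero =>
      simp only [List.prod_cons]
      have : (List.ofFn fun j : Fin n => if j.succ = (0 : Fin (n+1)) then x else 1).prod = 1 := by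
        apply List.prod_eq_one
        intro y hy
        rw [List.mem_ofFn] at hy
        obtain ⟨j, rfl⟩ := hy
        simp [Fin.succ_ne_zero]
      simp [this]
    | succ i' =>
      simp only [List.prod_cons, Function.comp]
      rw [if_neg (Ne.symm (Fin.succ_ne_zero i')), one_mul]
      have : (fun j : Fin n => if j.succ = i'.succ then x else 1)
          = fun j : Fin n => if j = i' then x else 1 := by
        funext j; simp [Fin.succ_inj]
      rw [this, ih]

end MacaulayAux

section
variable {k : Type*} [CommSemiring k] {n : ℕ}

open Finsupp in
lemma pd_commute (i j : Fin n) :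
    Commute ((pderiv i).toLinearMap : Module.End k (MvPolynomial (Fin n) k))
      (pderiv j).toLinearMap := by
  rcases eq_or_ne i j with rfl | hij
  · exact Commute.refl _
  · apply LinearMap.ext
    intro p
    simp only [Module.End.mul_apply, Derivation.coeFn_coe]
    induction p using MvPolynomial.induction_on' with
    | add p q hp hq => simp [map_add, hp, hq]
    | monomial s a =>
      simp only [pderiv_monomial]
      have h1 : s - single j 1 - single i 1 = s - single i 1 - single j 1 := by
        ext l; simp only [tsub_apply]; omega
      have h2 : (s - single j 1 : Fin n →₀ ℕ) i = s i := by
        rw [tsub_apply, single_apply, if_neg (Ne.symm hij)]; omega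
      have h3 : (s - single i 1 : Fin n →₀ ℕ) j = s j := by
        rw [tsub_apply, single_apply, if_neg hij]; omega
      rw [h1, h2, h3, mul_right_comm]

lemma Dmon_zero : (Dmon 0 : Module.End k (MvPolynomial (Fin n) k)) = 1 := by
  unfold Dmon
  simp

lemma Dmon_add (m m' : Fin n →₀ ℕ) :
    (Dmon (m + m') : Module.End k (MvPolynomial (Fin n) k)) = Dmon m * Dmon m' := by
  unfold Dmon
  have h : (fun i : Fin n => ((pderiv i).toLinearMap : Module.End k (MvPolynomial (Fin n) k))
        ^ (m + m') i)
      = fun i => (pderiv i).toLinearMap ^ m i * (pderiv i).toLinearMap ^ m' i := by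
    funext i; rw [Finsupp.add_apply, pow_add]
  rw [h, MacaulayAux.list_ofFn_prod_mul _ _
    (fun i j => (pd_commute i j).pow_pow (m i) (m' j))]

lemma Dmon_single (i : Fin n) (b : ℕ) :
    (Dmon (Finsupp.single i b) : Module.End k (MvPolynomial (Fin n) k))
      = (pderiv i).toLinearMap ^ b := by
  unfold Dmon
  have h : (fun j : Fin n => ((pderiv j).toLinearMap : Module.End k (MvPolynomial (Fin n) k))
        ^ (Finsupp.single i b) j)
      = fun j => if j = i then (pderiv i).toLinearMap ^ b else 1 := by
    funext j
    rcases eq_or_ne j i with rfl | h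
    · simp
    · simp [Finsupp.single_apply, Ne.symm h, h]
  rw [h, MacaulayAux.list_ofFn_prod_single]

open Finsupp in
lemma coeff_pderiv (i : Fin n) (u : Fin n →₀ ℕ) (q : MvPolynomial (Fin n) k) :
    MvPolynomial.coeff u (pderiv i q)
      = ((u i + 1 : ℕ) : k) * MvPolynomial.coeff (u + single i 1) q := by
  induction q using MvPolynomial.induction_on' with
  | add p q hp hq => simp [map_add, hp, hq, mul_add]
  | monomial s a =>
    rw [pderiv_monomial, MvPolynomial.coeff_monomial, MvPolynomial.coeff_monomial]
    by_cases hsu : s = u + single i 1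
    · subst hsu
      have h1 : u + single i 1 - single i 1 = u := by
        ext l
        simp only [tsub_apply, Finsupp.add_apply, single_apply]
        split_ifs <;> omega
      have h2 : (u + single i 1 : Fin n →₀ ℕ) i = u i + 1 := by
        simp
      rw [if_pos h1, if_pos rfl, h2]
      push_cast
      ring
    · rw [if_neg hsu]
      by_cases h1 : s - single i 1 = u
      · rw [if_pos h1]
        have hsi : s i = 0 := by
          by_contra hsi
          apply hsu
          ext l
          have hl := congrArg (fun v => v l) h1
          simp only [tsub_apply, single_apply] at hl
          simp only [Finsupp.add_apply, single_apply]
          rcases eq_or_ne i l with rfl | hne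
          · simp only [if_true, eq_self_iff_true] at hl ⊢
            omega
          · simp only [if_neg hne] at hl ⊢
            omega
        rw [hsi]
        push_cast
        ring
      · rw [if_neg h1, mul_zero]

open Finsupp in
lemma coeff_pd_pow (i : Fin n) (b : ℕ) :
    ∀ (u : Fin n →₀ ℕ) (q : MvPolynomial (Fin n) k),
    MvPolynomial.coeff u (((pderiv i).toLinearMap ^ b) q)
      = ((∏ t ∈ Finset.range b, (u i + t + 1) : ℕ) : k)
        * MvPolynomial.coeff (u + single i b) q := by
  induction b with
  | zero => intro u q; simp
  | succ b ih =>
    intro u q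
    rw [pow_succ, Module.End.mul_apply]
    simp only [Derivation.coeFn_coe]
    rw [ih, _root_.coeff_pderiv]
    have h1 : (u + single i b : Fin n →₀ ℕ) i = u i + b := by simp
    have h2 : u + single i b + single i 1 = u + single i (b + 1) := by
      rw [add_assoc, ← Finsupp.single_add]
    rw [h1, h2, Finset.prod_range_succ]
    push_cast
    ring

open Finsupp in
lemma coeff_Dmon (m : Fin n →₀ ℕ) :
    ∀ (u : Fin n →₀ ℕ) (q : MvPolynomial (Fin n) k),
    MvPolynomial.coeff u (Dmon m q)
      = ((∏ i, ∏ t ∈ Finset.range (m i), (u i + t + 1) : ℕ) : k)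
        * MvPolynomial.coeff (u + m) q := by
  induction m using Finsupp.induction with
  | zero => intro u q; simp [Dmon_zero]
  | single_add i b f hif hb ih =>
    intro u q
    rw [Dmon_add, Dmon_single, Module.End.mul_apply, coeff_pd_pow, ih]
    have hfi : f i = 0 := Finsupp.notMem_support_iff.mp hif
    have hL : ∏ j, ∏ t ∈ Finset.range ((single i b + f) j), (u j + t + 1)
        = (∏ t ∈ Finset.range b, (u i + t + 1))
          * ∏ j ∈ Finset.univ \ {i}, ∏ t ∈ Finset.range (f j), (u j + t + 1) := by
      rw [Finset.prod_eq_mul_prod_sdiff_singleton_of_mem (Finset.mem_univ i)]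
      congr 1
      · simp [hfi]
      · apply Finset.prod_congr rfl
        intro j hj
        simp only [Finset.mem_sdiff, Finset.mem_singleton] at hj
        rw [Finsupp.add_apply, single_apply, if_neg (fun h => hj.2 h.symm), zero_add]
    have hR : ∏ j, ∏ t ∈ Finset.range (f j), ((u + single i b : Fin n →₀ ℕ) j + t + 1)
        = ∏ j ∈ Finset.univ \ {i}, ∏ t ∈ Finset.range (f j), (u j + t + 1) := by
      rw [Finset.prod_eq_mul_prod_sdiff_singleton_of_mem (Finset.mem_univ i)]
      rw [hfi]
      simp only [Finset.range_zero, Finset.prod_empty, one_mul]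
      apply Finset.prod_congr rfl
      intro j hj
      simp only [Finset.mem_sdiff, Finset.mem_singleton] at hj
      rw [Finsupp.add_apply, single_apply, if_neg (fun h => hj.2 h.symm), add_zero]
    rw [hR, hL]
    have h2 : u + single i b + f = u + (single i b + f) := by rw [add_assoc]
    rw [h2]
    push_cast
    ring

end

section
variable {k : Type*} [CommSemiring k] {n : ℕ}

lemma Dop_superset {f : MvPolynomial (Fin n) k} {s : Finset (Fin n →₀ ℕ)}
    (h : f.support ⊆ s) :
    Dop f = ∑ m ∈ s, MvPolynomial.coeff m f • Dmon m := by
  unfold Dop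
  apply Finset.sum_subset h
  intro m _ hm
  rw [MvPolynomial.notMem_support_iff.mp hm, zero_smul]

lemma Dop_add (f g : MvPolynomial (Fin n) k) : Dop (f + g) = Dop f + Dop g := by
  rw [Dop_superset (s := f.support ∪ g.support)
      MvPolynomial.support_add,
    Dop_superset (s := f.support ∪ g.support) Finset.subset_union_left,
    Dop_superset (s := f.support ∪ g.support) Finset.subset_union_right,
    ← Finset.sum_add_distrib]
  apply Finset.sum_congr rfl
  intro m _
  rw [MvPolynomial.coeff_add, add_smul]

lemma Dop_monomial (m : Fin n →₀ ℕ) (a : k) :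
    Dop (MvPolynomial.monomial m a) = a • Dmon m := by
  classical
  by_cases ha : a = 0
  · subst ha
    rw [map_zero, zero_smul]
    unfold Dop
    simp
  · unfold Dop
    rw [MvPolynomial.support_monomial, if_neg ha, Finset.sum_singleton,
      MvPolynomial.coeff_monomial, if_pos rfl]

lemma Dop_C (a : k) (g : MvPolynomial (Fin n) k) : Dop (MvPolynomial.C a) g = a • g := by
  rw [MvPolynomial.C_apply, Dop_monomial, LinearMap.smul_apply, Dmon_zero,
    Module.End.one_apply]

lemma Dop_monomial_one_mul (u : Fin n →₀ ℕ) (f : MvPolynomial (Fin n) k) :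
    Dop (MvPolynomial.monomial u 1 * f) = Dmon u * Dop f := by
  induction f using MvPolynomial.induction_on' with
  | monomial m a =>
    rw [MvPolynomial.monomial_mul, one_mul, Dop_monomial, Dop_monomial, Dmon_add,
      mul_smul_comm]
  | add p q hp hq =>
    rw [mul_add, Dop_add, Dop_add, mul_add, hp, hq]

end

section
variable {k : Type*} [Field k] [CharZero k] {n : ℕ}

/-- `∏ i, (m i)!` -/
def mfac {n : ℕ} (m : Fin n →₀ ℕ) : ℕ := ∏ i, Nat.factorial (m i)

lemma mfac_ne_zero (m : Fin n →₀ ℕ) : ((mfac m : ℕ) : k) ≠ 0 := by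
  have : 0 < mfac m := Finset.prod_pos fun i _ => Nat.factorial_pos _
  exact_mod_cast Nat.cast_ne_zero.mpr this.ne'

lemma coeff_zero_Dmon (m : Fin n →₀ ℕ) (q : MvPolynomial (Fin n) k) :
    MvPolynomial.coeff 0 (Dmon m q) = ((mfac m : ℕ) : k) * MvPolynomial.coeff m q := by
  rw [coeff_Dmon, zero_add]
  congr 2
  unfold mfac
  apply Finset.prod_congr rfl
  intro i _
  have : ∀ b : ℕ, ∏ t ∈ Finset.range b, ((0 : Fin n →₀ ℕ) i + t + 1) = Nat.factorial b := by
    intro b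
    induction b with
    | zero => simp
    | succ b ih => rw [Finset.prod_range_succ, ih, Nat.factorial_succ]; simp; ring
  exact this (m i)

lemma coeff_zero_Dop_monomial (m : Fin n →₀ ℕ) (a : k) (g : MvPolynomial (Fin n) k) :
    MvPolynomial.coeff 0 (Dop (MvPolynomial.monomial m a) g)
      = a * (((mfac m : ℕ) : k) * MvPolynomial.coeff m g) := by
  rw [Dop_monomial, LinearMap.smul_apply, MvPolynomial.coeff_smul, coeff_zero_Dmon,
    smul_eq_mul]

lemma coeff_zero_Dop_eq_phi (φ : MvPolynomial (Fin n) k →ₗ[k] k)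
    (g : MvPolynomial (Fin n) k)
    (hg : ∀ u : Fin n →₀ ℕ, ((mfac u : ℕ) : k) * MvPolynomial.coeff u g
      = φ (MvPolynomial.monomial u 1)) (f : MvPolynomial (Fin n) k) :
    MvPolynomial.coeff 0 (Dop f g) = φ f := by
  induction f using MvPolynomial.induction_on' with
  | monomial m a =>
    rw [coeff_zero_Dop_monomial, hg m]
    have : (MvPolynomial.monomial m a : MvPolynomial (Fin n) k)
        = a • MvPolynomial.monomial m 1 := by
      rw [MvPolynomial.smul_monomial, smul_eq_mul, mul_one]
    rw [this, map_smul, smul_eq_mul]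
  | add p q hp hq =>
    rw [Dop_add, LinearMap.add_apply, MvPolynomial.coeff_add, map_add, hp, hq]

end

lemma exists_X_pow_mem {k : Type*} [Field k] {n : ℕ}
    (I : Ideal (MvPolynomial (Fin n) k))
    (hI : ∀ f ∈ I, ∀ d : ℕ, MvPolynomial.homogeneousComponent d f ∈ I)
    (hfin : FiniteDimensional k (MvPolynomial (Fin n) k ⧸ I)) (i : Fin n) :
    ∃ d : ℕ, (X i : MvPolynomial (Fin n) k) ^ d ∈ I := by
  classical
  set N := Module.finrank k (MvPolynomial (Fin n) k ⧸ I) with hN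
  have hnl : ¬ LinearIndependent k
      (fun d : Fin (N + 1) =>
        Ideal.Quotient.mkₐ k I ((X i : MvPolynomial (Fin n) k) ^ (d : ℕ))) := by
    intro hli
    have h := hli.fintype_card_le_finrank
    rw [Fintype.card_fin] at h
    omega
  rw [Fintype.not_linearIndependent_iff] at hnl
  obtain ⟨c, hsum, d0, hd0⟩ := hnl
  have hp : (∑ d : Fin (N + 1), c d • (X i : MvPolynomial (Fin n) k) ^ (d : ℕ)) ∈ I := by
    have h0 : Ideal.Quotient.mkₐ k I
        (∑ d : Fin (N+1), c d • (X i : MvPolynomial (Fin n) k) ^ (d : ℕ)) = 0 := by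
      rw [map_sum]
      simp_rw [map_smul]
      exact hsum
    rwa [Ideal.Quotient.mkₐ_eq_mk, Ideal.Quotient.eq_zero_iff_mem] at h0
  have hcomp := hI _ hp (d0 : ℕ)
  have heq : MvPolynomial.homogeneousComponent (d0 : ℕ)
        (∑ d : Fin (N+1), c d • (X i : MvPolynomial (Fin n) k) ^ (d : ℕ))
      = c d0 • (X i : MvPolynomial (Fin n) k) ^ (d0 : ℕ) := by
    rw [map_sum, Finset.sum_eq_single d0]
    · rw [map_smul, MvPolynomial.homogeneousComponent_of_mem
        ((MvPolynomial.mem_homogeneousSubmodule _ _).mpr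
          (MvPolynomial.isHomogeneous_X_pow i (d0 : ℕ))), if_pos rfl]
    · intro d _ hd
      rw [map_smul, MvPolynomial.homogeneousComponent_of_mem
        ((MvPolynomial.mem_homogeneousSubmodule _ _).mpr
          (MvPolynomial.isHomogeneous_X_pow i (d : ℕ))), if_neg, smul_zero]
      exact fun h => hd (Fin.ext h.symm)
    · intro h; exact absurd (Finset.mem_univ d0) h
  rw [heq, MvPolynomial.smul_eq_C_mul] at hcomp
  refine ⟨d0, ?_⟩
  have h2 := I.mul_mem_left (MvPolynomial.C (c d0)⁻¹) hcomp
  rwa [← mul_assoc, ← MvPolynomial.C_mul, inv_mul_cancel₀ hd0, MvPolynomial.C_1, one_mul] at h2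

/-- **Macaulay/Fourier duality.**  Let `k` be a field of characteristic `0`,
`R = k[X₁,…,Xₙ]`, and `I ⊆ R` a homogeneous ideal with `S = R/I` finite-dimensional
over `k`.  Let `S^∨ = {g : D_f g = 0 for all f ∈ I}` be the Fourier dual of `S`.
Then `S^∨` is a finitely generated `R`-submodule of `R^∨` (every element of `S^∨`
is an `R`-combination, via the operators `D`, of a fixed finite subset of `S^∨`),
and `ann_R(S^∨) = I`: a polynomial `f` lies in `I` iff `D_f g = 0` for every `g`
annihilated by all elements of `I`. -/
theorem stmt_10
    {k : Type*} [Field k] [CharZero k] {n : ℕ}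
    (I : Ideal (MvPolynomial (Fin n) k))
    (hI : ∀ f ∈ I, ∀ d : ℕ, MvPolynomial.homogeneousComponent d f ∈ I)
    (hfin : FiniteDimensional k (MvPolynomial (Fin n) k ⧸ I)) :
    (∃ s : Finset (MvPolynomial (Fin n) k),
      (∀ g ∈ s, ∀ f ∈ I, Dop f g = 0) ∧
      ∀ g : MvPolynomial (Fin n) k, (∀ f ∈ I, Dop f g = 0) →
        ∃ c : MvPolynomial (Fin n) k → MvPolynomial (Fin n) k,
          g = ∑ h ∈ s, Dop (c h) h) ∧
    ∀ f : MvPolynomial (Fin n) k,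
      f ∈ I ↔ ∀ g : MvPolynomial (Fin n) k, (∀ f' ∈ I, Dop f' g = 0) → Dop f g = 0 := by
  classical
  choose e he using fun i => exists_X_pow_mem I hI hfin i
  set E := Finset.univ.sup e with hE
  have hesc : ∀ (m : Fin n →₀ ℕ), (∃ i, e i ≤ m i) → ∀ a : k,
      (MvPolynomial.monomial m a : MvPolynomial (Fin n) k) ∈ I := by
    rintro m ⟨i, hi⟩ a
    have hdecomp : (MvPolynomial.monomial m a : MvPolynomial (Fin n) k)
        = MvPolynomial.monomial (m - Finsupp.single i (e i)) a * (X i) ^ (e i) := by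
      have hidx : m - Finsupp.single i (e i) + Finsupp.single i (e i) = m := by
        ext l
        simp only [Finsupp.add_apply, Finsupp.tsub_apply, Finsupp.single_apply]
        split_ifs with h
        · subst h; omega
        · omega
      rw [MvPolynomial.X_pow_eq_monomial, MvPolynomial.monomial_mul, mul_one, hidx]
    rw [hdecomp]
    exact I.mul_mem_left _ (he i)
  set T : Finset (Fin n →₀ ℕ) := Finset.image
    (fun f : Fin n → Fin (E+1) => Finsupp.equivFunOnFinite.symm fun i => (f i : ℕ))
    Finset.univ with hTdef
  have hTin : ∀ m : Fin n →₀ ℕ, (∀ i, m i ≤ E) → m ∈ T := by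
    intro m hm
    rw [hTdef, Finset.mem_image]
    refine ⟨fun i => ⟨m i, Nat.lt_succ_of_le (hm i)⟩, Finset.mem_univ _, ?_⟩
    ext l
    rw [Finsupp.equivFunOnFinite_symm_apply_apply]
  have hTout : ∀ m : Fin n →₀ ℕ, m ∉ T → ∃ i, e i ≤ m i := by
    intro m hm
    by_contra h
    push_neg at h
    exact hm (hTin m fun i => le_trans (h i).le (Finset.le_sup (Finset.mem_univ i)))
  have hsupp : ∀ g : MvPolynomial (Fin n) k, (∀ f ∈ I, Dop f g = 0) →
      ∀ m : Fin n →₀ ℕ, m ∉ T → MvPolynomial.coeff m g = 0 := by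
    intro g hg m hm
    have hmem : (MvPolynomial.monomial m 1 : MvPolynomial (Fin n) k) ∈ I :=
      hesc m (hTout m hm) 1
    have h0 := congrArg (MvPolynomial.coeff 0) (hg _ hmem)
    rw [coeff_zero_Dop_monomial, one_mul, MvPolynomial.coeff_zero] at h0
    exact (mul_eq_zero.mp h0).resolve_left (mfac_ne_zero m)
  constructor
  · -- finite generation
    set W : Submodule k (MvPolynomial (Fin n) k) :=
      { carrier := {g | ∀ f ∈ I, Dop f g = 0}
        add_mem' := fun {a b} ha hb => by
          intro f hf
          rw [map_add, ha f hf, hb f hf, add_zero]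
        zero_mem' := fun f hf => map_zero (Dop f)
        smul_mem' := fun c a ha => by
          intro f hf
          rw [map_smul, ha f hf, smul_zero] } with hWdef
    set V := Submodule.span k
      ((fun m => (MvPolynomial.monomial m 1 : MvPolynomial (Fin n) k)) '' ↑T) with hVdef
    have hWV : W ≤ V := by
      intro g hg
      have hsg : ∀ m ∈ g.support, m ∈ T := by
        intro m hm
        by_contra hmT
        exact MvPolynomial.mem_support_iff.mp hm (hsupp g hg m hmT)
      rw [MvPolynomial.as_sum g]
      apply Submodule.sum_mem
      intro m hm
      have hmon : (MvPolynomial.monomial m (MvPolynomial.coeff m g) : MvPolynomial (Fin n) k)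
          = MvPolynomial.coeff m g • MvPolynomial.monomial m 1 := by
        rw [MvPolynomial.smul_monomial, smul_eq_mul, mul_one]
      rw [hmon]
      exact Submodule.smul_mem _ _ (Submodule.subset_span ⟨m, hsg m hm, rfl⟩)
    have hVfg : V.FG :=
      ⟨T.image (fun m => MvPolynomial.monomial m 1), by rw [Finset.coe_image]⟩
    haveI hVnoeth : IsNoetherian k ↥V := isNoetherian_of_fg_of_noetherian _ hVfg
    have hWfg : W.FG := by
      have h1 : (W.comap V.subtype).FG := IsNoetherian.noetherian _
      have h2 : Submodule.map V.subtype (W.comap V.subtype) = W := by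
        rw [Submodule.map_comap_subtype]
        exact inf_eq_right.mpr hWV
      rw [← h2]
      exact Submodule.FG.map _ h1
    obtain ⟨s, hs⟩ := hWfg
    refine ⟨s, ?_, ?_⟩
    · intro g hg f hf
      have hgW : g ∈ W := hs ▸ Submodule.subset_span (Finset.mem_coe.mpr hg)
      exact hgW f hf
    · intro g hg
      have hgW : g ∈ Submodule.span k (↑s : Set (MvPolynomial (Fin n) k)) := by
        rw [hs]; exact hg
      obtain ⟨c, -, hc⟩ := Submodule.mem_span_finset.mp hgW
      refine ⟨fun h => MvPolynomial.C (c h), ?_⟩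
      rw [← hc]
      apply Finset.sum_congr rfl
      intro h _
      exact (Dop_C _ _).symm
  · -- annihilator
    intro f
    constructor
    · exact fun hf g hg => hg f hf
    · intro hall
      by_contra hfI
      have hmk : Ideal.Quotient.mk I f ≠ 0 := fun h => hfI (Ideal.Quotient.eq_zero_iff_mem.mp h)
      obtain ⟨φ', hφ'⟩ : ∃ φ' : Module.Dual k (MvPolynomial (Fin n) k ⧸ I),
          φ' (Ideal.Quotient.mk I f) ≠ 0 := by
        by_contra h
        push_neg at h
        exact hmk ((Module.forall_dual_apply_eq_zero_iff k _).mp h)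
      set φ : MvPolynomial (Fin n) k →ₗ[k] k :=
        φ'.comp (Ideal.Quotient.mkₐ k I).toLinearMap with hφdef
      have hφI : ∀ x ∈ I, φ x = 0 := by
        intro x hx
        have hx0 : Ideal.Quotient.mkₐ k I x = 0 := by
          rw [Ideal.Quotient.mkₐ_eq_mk]
          exact Ideal.Quotient.eq_zero_iff_mem.mpr hx
        simp [hφdef, LinearMap.comp_apply, hx0]
      have hφf : φ f ≠ 0 := by
        simpa [hφdef, Ideal.Quotient.mkₐ_eq_mk] using hφ'
      set g : MvPolynomial (Fin n) k :=
        ∑ m ∈ T, MvPolynomial.monomial m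
          (((mfac m : ℕ) : k)⁻¹ * φ (MvPolynomial.monomial m 1)) with hgdef
      have hgc : ∀ u : Fin n →₀ ℕ, ((mfac u : ℕ) : k) * MvPolynomial.coeff u g
          = φ (MvPolynomial.monomial u 1) := by
        intro u
        have hcu : MvPolynomial.coeff u g
            = if u ∈ T then ((mfac u : ℕ) : k)⁻¹ * φ (MvPolynomial.monomial u 1) else 0 := by
          rw [hgdef, MvPolynomial.coeff_sum]
          simp_rw [MvPolynomial.coeff_monomial]
          exact Finset.sum_ite_eq' T u _
        by_cases hu : u ∈ T
        · rw [hcu, if_pos hu, ← mul_assoc, mul_inv_cancel₀ (mfac_ne_zero u), one_mul]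
        · rw [hcu, if_neg hu, mul_zero]
          exact (hφI _ (hesc u (hTout u hu) 1)).symm
      have hBg := coeff_zero_Dop_eq_phi φ g hgc
      have hgW : ∀ f' ∈ I, Dop f' g = 0 := by
        intro f' hf'
        apply MvPolynomial.ext
        intro u
        rw [MvPolynomial.coeff_zero]
        have h1 : MvPolynomial.coeff 0 (Dop (MvPolynomial.monomial u 1 * f') g)
            = ((mfac u : ℕ) : k) * MvPolynomial.coeff u (Dop f' g) := by
          rw [Dop_monomial_one_mul, Module.End.mul_apply, coeff_zero_Dmon]
        rw [hBg] at h1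
        have h2 : φ (MvPolynomial.monomial u 1 * f') = 0 := hφI _ (I.mul_mem_left _ hf')
        rw [h2] at h1
        exact (mul_eq_zero.mp h1.symm).resolve_left (mfac_ne_zero u)
      have hzero := hall g hgW
      have hco : MvPolynomial.coeff 0 (Dop f g) = 0 := by
        rw [hzero, MvPolynomial.coeff_zero]
      rw [hBg] at hco
      exact hφf hco
end

section
/- Suppose y ∈ ℂᴺ, y ≠ 0, has trivial infinitesimal stabilizer, i.e. the weights {β_j : y_j ≠ 0} span ℝʳ. Fix μ_c ∈ ℝʳ and set f_c = ‖μ_c‖². Then there exist an open neighborhood U of ŷ = y/‖y‖ in the unit sphere of ℂᴺ and constants k > 0 and ε > 0 such that ‖∇f(x)‖² ≥ k·|f(x) − f_c|^{3/2} for all x ∈ ℂᴺ \ {0} with x/‖x‖ ∈ U and ‖μ(x) − μ_c‖ < ε. -/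
open Finset ContinuousLinearMap


lemma rpow_sq_32 (s : ℝ) (hs : 0 ≤ s) : ((s^2 : ℝ)) ^ (3/2 : ℝ) = s ^ 3 := by
  rw [← Real.rpow_natCast s 2, ← Real.rpow_mul hs, ← Real.rpow_natCast s 3]
  norm_num

lemma rpow_split (d : ℝ) (hd : 0 ≤ d) : (d : ℝ) ^ (3/2 : ℝ) = d * d ^ (1/2 : ℝ) := by
  rcases eq_or_lt_of_le hd with h | h
  · rw [← h]; rw [Real.zero_rpow (by norm_num), Real.zero_rpow (by norm_num)]; ring
  · rw [← Real.rpow_one_add' (le_of_lt h) (by norm_num)]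
    norm_num

lemma key_scalar_main {F : Type*} [NormedAddCommGroup F] (mc a : F) (hM0 : 0 < ‖mc‖)
    (ε c₁ : ℝ) (hε0 : 0 < ε) (hεM : ε ≤ ‖mc‖/2) (hc₁ : 0 < c₁)
    (hlow : ∀ v : F, ‖v - mc‖ < ε → c₁ * ‖v - mc‖ ≤ ‖v + a‖) :
    ∃ ε' > (0:ℝ), ∃ C > (0:ℝ), ∀ v : F, ‖v - mc‖ < ε' →
      |‖v‖^2 - ‖mc‖^2| ^ (3/2 : ℝ) ≤ C * (‖v + a‖ * ‖v‖^2) := by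
  set M := ‖mc‖
  refine ⟨ε, hε0, (3*M)^(3/2:ℝ) * ε^(1/2:ℝ) / c₁ * (4 / M^2), by positivity, ?_⟩
  intro v hv
  set d := ‖v - mc‖ with hd
  have hd0 : 0 ≤ d := norm_nonneg _
  have hvM : |‖v‖ - M| ≤ d := abs_norm_sub_norm_le v mc
  have hv2 : M/2 ≤ ‖v‖ := by have := abs_le.mp hvM; linarith [this.1]
  have hvU : ‖v‖ ≤ 3*M/2 := by have := abs_le.mp hvM; linarith [this.2]
  have ht : |‖v‖^2 - M^2| ≤ 3*M*d := by
    have h1 : ‖v‖^2 - M^2 = (‖v‖ - M) * (‖v‖ + M) := by ring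
    rw [h1, abs_mul]
    have h2 : |‖v‖ + M| ≤ 3*M := by
      rw [abs_of_nonneg (by positivity)]; linarith
    calc |‖v‖ - M| * |‖v‖ + M| ≤ d * (3*M) :=
          mul_le_mul hvM h2 (abs_nonneg _) hd0
    _ = 3*M*d := by ring
  have h3 : |‖v‖^2 - M^2| ^ (3/2:ℝ) ≤ (3*M*d) ^ (3/2:ℝ) :=
    Real.rpow_le_rpow (abs_nonneg _) ht (by norm_num)
  have h4 : (3*M*d) ^ (3/2:ℝ) = (3*M)^(3/2:ℝ) * (d * d^(1/2:ℝ)) := by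
    rw [Real.mul_rpow (by positivity) hd0, rpow_split d hd0]
  have h5 : d ^ (1/2:ℝ) ≤ ε ^ (1/2:ℝ) :=
    Real.rpow_le_rpow hd0 (le_of_lt hv) (by norm_num)
  have hva := hlow v hv
  have hM2 : (1:ℝ) ≤ (4 / M^2) * ‖v‖^2 := by
    rw [div_mul_eq_mul_div, le_div_iff₀ (by positivity)]
    nlinarith
  calc |‖v‖^2 - M^2| ^ (3/2:ℝ) ≤ (3*M)^(3/2:ℝ) * (d * d^(1/2:ℝ)) := by rw [← h4]; exact h3
  _ ≤ (3*M)^(3/2:ℝ) * (d * ε^(1/2:ℝ)) := by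
      apply mul_le_mul_of_nonneg_left (mul_le_mul_of_nonneg_left h5 hd0) (by positivity)
  _ = ((3*M)^(3/2:ℝ) * ε^(1/2:ℝ) / c₁) * (c₁ * d) := by field_simp
  _ ≤ ((3*M)^(3/2:ℝ) * ε^(1/2:ℝ) / c₁) * ‖v + a‖ := by
      apply mul_le_mul_of_nonneg_left hva (by positivity)
  _ = ((3*M)^(3/2:ℝ) * ε^(1/2:ℝ) / c₁) * ‖v + a‖ * 1 := by ring
  _ ≤ ((3*M)^(3/2:ℝ) * ε^(1/2:ℝ) / c₁) * ‖v + a‖ * ((4 / M^2) * ‖v‖^2) := by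
      apply mul_le_mul_of_nonneg_left hM2 (by positivity)
  _ = ((3*M)^(3/2:ℝ) * ε^(1/2:ℝ) / c₁ * (4 / M^2)) * (‖v + a‖ * ‖v‖^2) := by ring

lemma key_scalar {F : Type*} [NormedAddCommGroup F] (mc a : F) :
    ∃ ε > (0:ℝ), ∃ C > (0:ℝ), ∀ v : F, ‖v - mc‖ < ε →
      |‖v‖^2 - ‖mc‖^2| ^ (3/2 : ℝ) ≤ C * (‖v + a‖ * ‖v‖^2) := by
  by_cases hM : mc = 0
  · subst hM
    by_cases ha : a = 0
    · subst ha
      refine ⟨1, one_pos, 1, one_pos, ?_⟩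
      intro v _
      have h2 : |‖v‖^2 - ‖(0:F)‖^2| = ‖v‖^2 := by
        rw [norm_zero]; ring_nf
        rw [abs_of_nonneg (by positivity)]
      rw [h2, rpow_sq_32 _ (norm_nonneg v), one_mul, add_zero]
      calc ‖v‖^3 = ‖v‖ * ‖v‖^2 := by ring
      _ ≤ ‖v‖ * ‖v‖^2 := le_refl _
    · have ha0 : 0 < ‖a‖ := norm_pos_iff.mpr ha
      refine ⟨‖a‖/2, by positivity, 1, one_pos, ?_⟩
      intro v hv
      simp only [sub_zero] at hv
      have hva : ‖v‖ ≤ ‖v + a‖ := by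
        have h1 : ‖(v + a) - v‖ ≤ ‖v + a‖ + ‖v‖ := norm_sub_le _ _
        have h2 : (v + a) - v = a := by abel
        rw [h2] at h1
        linarith
      have h2 : |‖v‖^2 - ‖(0:F)‖^2| = ‖v‖^2 := by
        rw [norm_zero]; ring_nf
        rw [abs_of_nonneg (by positivity)]
      rw [h2, rpow_sq_32 _ (norm_nonneg v), one_mul]
      calc ‖v‖^3 = ‖v‖ * ‖v‖^2 := by ring
      _ ≤ ‖v + a‖ * ‖v‖^2 := mul_le_mul_of_nonneg_right hva (sq_nonneg _)
  · have hM0 : 0 < ‖mc‖ := norm_pos_iff.mpr hM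
    by_cases hA : mc + a = 0
    · have ha : a = -mc := eq_neg_of_add_eq_zero_right hA
      apply key_scalar_main mc a hM0 (‖mc‖/2) 1 (by positivity) (le_refl _) one_pos
      intro v _
      rw [ha, one_mul]
      have h : v + -mc = v - mc := by abel
      rw [h]
    · have hA0 : 0 < ‖mc + a‖ := norm_pos_iff.mpr hA
      set ε := min (‖mc‖/2) (‖mc + a‖/2) with hε
      have hε0 : 0 < ε := lt_min (by positivity) (by positivity)
      apply key_scalar_main mc a hM0 ε (‖mc + a‖/(2*ε)) hε0 (min_le_left _ _) (by positivity)
      intro v hv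
      have h1 : ‖mc + a‖ ≤ ‖v + a‖ + ‖v - mc‖ := by
        have h2 : (v + a) - (v - mc) = mc + a := by abel
        have := norm_sub_le (v + a) (v - mc)
        rw [h2] at this
        linarith
      have hεA : ε ≤ ‖mc + a‖/2 := min_le_right _ _
      have h3 : ‖mc + a‖/2 ≤ ‖v + a‖ := by linarith
      calc ‖mc + a‖/(2*ε) * ‖v - mc‖ ≤ ‖mc + a‖/(2*ε) * ε :=
            mul_le_mul_of_nonneg_left (le_of_lt hv) (by positivity)
      _ = ‖mc + a‖/2 := by field_simp
      _ ≤ ‖v + a‖ := h3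


lemma coercive {n r : ℕ} (hr : 1 ≤ r) (S : Finset (Fin n))
    (b : Fin n → EuclideanSpace ℝ (Fin r))
    (hspan : Submodule.span ℝ (b '' ↑S) = ⊤) :
    ∃ lam > (0:ℝ), ∀ u : EuclideanSpace ℝ (Fin r),
      lam * ‖u‖^2 ≤ ∑ j ∈ S, (inner ℝ (b j) u : ℝ)^2 := by
  haveI : Nonempty (Fin r) := ⟨⟨0, hr⟩⟩
  haveI : Nontrivial (EuclideanSpace ℝ (Fin r)) := by
    refine ⟨0, EuclideanSpace.single ⟨0, hr⟩ 1, ?_⟩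
    intro h
    have := congrFun (congrArg (fun v : EuclideanSpace ℝ (Fin r) => (v : Fin r → ℝ)) h) ⟨0, hr⟩
    simp [EuclideanSpace.single_apply] at this
  set φ : EuclideanSpace ℝ (Fin r) → ℝ := fun u => ∑ j ∈ S, (inner ℝ (b j) u : ℝ)^2 with hφ
  have hcont : Continuous φ := by
    apply continuous_finset_sum
    intro j _
    exact ((innerSL ℝ (b j)).continuous).pow 2
  have hcpt : IsCompact (Metric.sphere (0 : EuclideanSpace ℝ (Fin r)) 1) :=
    isCompact_sphere _ _
  have hne : (Metric.sphere (0 : EuclideanSpace ℝ (Fin r)) 1).Nonempty :=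
    NormedSpace.sphere_nonempty.mpr zero_le_one
  obtain ⟨u₀, hu₀, hmin⟩ := hcpt.exists_isMinOn hne hcont.continuousOn
  have hu₀n : ‖u₀‖ = 1 := by simpa using hu₀
  have hlam0 : 0 < φ u₀ := by
    rcases lt_or_eq_of_le (Finset.sum_nonneg fun j _ => sq_nonneg ((inner ℝ (b j) u₀ : ℝ))) with h | h
    · exact h
    · exfalso
      have hzero : ∀ j ∈ S, (inner ℝ (b j) u₀ : ℝ) = 0 := by
        intro j hj
        have := (Finset.sum_eq_zero_iff_of_nonneg (fun j _ => sq_nonneg ((inner ℝ (b j) u₀ : ℝ)))).mp h.symm j hj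
        exact pow_eq_zero_iff (by norm_num) |>.mp this
      have hall : ∀ w ∈ Submodule.span ℝ (b '' ↑S), (inner ℝ w u₀ : ℝ) = 0 := by
        intro w hw
        induction hw using Submodule.span_induction with
        | mem w hw =>
            obtain ⟨j, hj, rfl⟩ := hw
            exact hzero j (by simpa using hj)
        | zero => simp
        | add w₁ w₂ _ _ h1 h2 => rw [inner_add_left, h1, h2]; ring
        | smul c w _ h1 => rw [real_inner_smul_left, h1]; ring
      have : (inner ℝ u₀ u₀ : ℝ) = 0 := hall u₀ (hspan ▸ Submodule.mem_top)
      rw [real_inner_self_eq_norm_sq, hu₀n] at this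
      norm_num at this
  refine ⟨φ u₀, hlam0, ?_⟩
  intro u
  by_cases hu : u = 0
  · simp [hu, hφ]
  · have hun : 0 < ‖u‖ := norm_pos_iff.mpr hu
    have hmem : ‖u‖⁻¹ • u ∈ Metric.sphere (0 : EuclideanSpace ℝ (Fin r)) 1 := by
      simp [norm_smul, abs_of_pos (inv_pos.mpr hun), inv_mul_cancel₀ (ne_of_gt hun)]
    have h1 := hmin hmem
    have h2 : φ (‖u‖⁻¹ • u) = ‖u‖⁻¹^2 * φ u := by
      rw [hφ]
      simp only [real_inner_smul_right, Finset.mul_sum, mul_pow]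
    have h1' : φ u₀ ≤ φ (‖u‖⁻¹ • u) := h1
    rw [h2] at h1'
    have h3 : φ u₀ * ‖u‖^2 ≤ ‖u‖⁻¹^2 * φ u * ‖u‖^2 :=
      mul_le_mul_of_nonneg_right h1' (sq_nonneg _)
    calc φ u₀ * ‖u‖^2 ≤ ‖u‖⁻¹^2 * φ u * ‖u‖^2 := h3
    _ = φ u := by field_simp


lemma eu_norm_sq {𝕜 : Type*} [RCLike 𝕜] {n : ℕ} (w : EuclideanSpace 𝕜 (Fin n)) :
    ‖w‖^2 = ∑ a, ‖w a‖^2 := by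
  rw [EuclideanSpace.norm_eq, Real.sq_sqrt (Finset.sum_nonneg fun a _ => sq_nonneg _)]

lemma eu_norm_sq' {n : ℕ} (w : EuclideanSpace ℝ (Fin n)) :
    ‖w‖^2 = ∑ a, (w a)^2 := by
  rw [eu_norm_sq]
  exact Finset.sum_congr rfl fun a _ => by rw [Real.norm_eq_abs, sq_abs]

lemma sq_trick {G V Q : ℝ} (hG : 0 ≤ G) (hV : 0 ≤ V) (hQ : 0 < Q) (hvn : V^2 = Q)
    (h : 2*Q ≤ G*V) : 4*Q ≤ G^2 := by
  nlinarith [sq_nonneg (G - 2*V), h, hvn]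

lemma grad_lower {N r : ℕ} (β : Fin N → EuclideanSpace ℝ (Fin r)) (α : EuclideanSpace ℝ (Fin r))
    (μ : EuclideanSpace ℂ (Fin N) → EuclideanSpace ℝ (Fin r))
    (hμ : ∀ x : EuclideanSpace ℂ (Fin N), ∀ a : Fin r,
      μ x a = (1 / 2 : ℝ) * (∑ j, ‖x j‖ ^ 2 * β j a) - α a)
    (f : EuclideanSpace ℂ (Fin N) → ℝ) (hf : ∀ x, f x = ‖μ x‖ ^ 2)
    (x : EuclideanSpace ℂ (Fin N)) :
    4 * ∑ j, (∑ a, β j a * μ x a)^2 * ‖x j‖^2 ≤ ‖gradient f x‖^2 := by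
  classical
  set cj : Fin N → ℝ := fun j => ∑ a, β j a * μ x a with hcj
  set Q : ℝ := ∑ j, (cj j)^2 * ‖x j‖^2 with hQ
  have hQ0 : 0 ≤ Q := Finset.sum_nonneg fun j _ => mul_nonneg (sq_nonneg _) (sq_nonneg _)
  set v : EuclideanSpace ℂ (Fin N) :=
    (WithLp.equiv 2 (Fin N → ℂ)).symm (fun j => (cj j : ℂ) * x j) with hv
  have hvj : ∀ j, v j = (cj j : ℂ) * x j := fun j => rfl
  set Pj : Fin N → (EuclideanSpace ℂ (Fin N) →L[ℝ] ℂ) :=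
    fun j => (EuclideanSpace.proj j).restrictScalars ℝ with hPj
  set Dq : Fin N → (EuclideanSpace ℂ (Fin N) →L[ℝ] ℝ) :=
    fun j => 2 • (innerSL ℝ (x j)).comp (Pj j) with hDq
  have hq : ∀ j, HasFDerivAt (fun z : EuclideanSpace ℂ (Fin N) => ‖z j‖^2) (Dq j) x := fun j =>
    ((Pj j).hasFDerivAt (x := x)).norm_sq
  set Da : Fin r → (EuclideanSpace ℂ (Fin N) →L[ℝ] ℝ) :=
    fun a => (1/2 : ℝ) • ∑ j, (β j a) • Dq j with hDa
  set g : Fin r → EuclideanSpace ℂ (Fin N) → ℝ :=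
    fun a z => (1/2 : ℝ) * (∑ j, ‖z j‖^2 * β j a) - α a with hg
  have hga : ∀ a, HasFDerivAt (g a) (Da a) x := by
    intro a
    exact ((HasFDerivAt.fun_sum (fun j _ => (hq j).mul_const (β j a))).const_mul (1/2)).sub_const (α a)
  set L : EuclideanSpace ℂ (Fin N) →L[ℝ] ℝ := ∑ a, ((g a x) • Da a + (g a x) • Da a) with hL
  have hsq : ∀ a, HasFDerivAt (fun z => (g a z)^2) ((g a x) • Da a + (g a x) • Da a) x := by
    intro a
    have := (hga a).mul (hga a)
    rw [show (fun z => (g a z)^2) = g a * g a from by funext z; simp [pow_two]]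
    exact this
  have hfeq : f = fun z => ∑ a, (g a z)^2 := by
    funext z
    rw [hf, eu_norm_sq']
    exact Finset.sum_congr rfl fun a _ => by rw [hμ z a]
  have hLf : HasFDerivAt f L x := by
    rw [hfeq, hL]
    exact HasFDerivAt.fun_sum (fun a _ => hsq a)
  have hgrad : (inner ℝ (gradient f x) v : ℝ) = L v := by
    have hdf : fderiv ℝ f x = L := hLf.fderiv
    show (inner ℝ ((InnerProductSpace.toDual ℝ _).symm (fderiv ℝ f x)) v : ℝ) = L v
    rw [hdf, InnerProductSpace.toDual_symm_apply]
  have hinner : ∀ j, (inner ℝ (x j) (v j) : ℝ) = cj j * ‖x j‖^2 := by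
    intro j
    rw [hvj j, Complex.inner]
    have h1 : ((cj j : ℂ) * x j) * (starRingEnd ℂ) (x j)
        = (cj j : ℂ) * ((starRingEnd ℂ) (x j) * x j) := by ring
    rw [h1, Complex.conj_mul', ← Complex.ofReal_pow, ← Complex.ofReal_mul, Complex.ofReal_re]
  have hPv : ∀ j, (Pj j) v = v j := fun j => rfl
  have hDqv : ∀ j, Dq j v = 2 * (cj j * ‖x j‖^2) := by
    intro j
    have : Dq j v = 2 • ((innerSL ℝ (x j)) ((Pj j) v)) := rfl
    rw [this, hPv, innerSL_apply_apply, hinner j, nsmul_eq_mul]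
    push_cast
    ring
  have hDav : ∀ a, Da a v = ∑ j, β j a * (cj j * ‖x j‖^2) := by
    intro a
    rw [hDa]
    simp only [ContinuousLinearMap.smul_apply, ContinuousLinearMap.sum_apply, smul_eq_mul, hDqv]
    rw [Finset.mul_sum]
    exact Finset.sum_congr rfl fun j _ => by ring
  have hgx : ∀ a, g a x = μ x a := fun a => (hμ x a).symm
  have hLv : L v = 2 * Q := by
    rw [hL]
    simp only [ContinuousLinearMap.sum_apply, ContinuousLinearMap.add_apply,
      ContinuousLinearMap.smul_apply, smul_eq_mul]
    calc ∑ a, (g a x * (Da a) v + g a x * (Da a) v)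
        = ∑ a, ∑ j, 2 * (μ x a * (β j a * (cj j * ‖x j‖^2))) := by
          refine Finset.sum_congr rfl fun a _ => ?_
          rw [hgx a, hDav a, Finset.mul_sum, ← Finset.sum_add_distrib]
          exact Finset.sum_congr rfl fun j _ => by ring
      _ = ∑ j, ∑ a, 2 * (μ x a * (β j a * (cj j * ‖x j‖^2))) := Finset.sum_comm
      _ = ∑ j, 2 * ((cj j * ‖x j‖^2) * ∑ a, β j a * μ x a) := by
          refine Finset.sum_congr rfl fun j _ => ?_
          rw [Finset.mul_sum, Finset.mul_sum]
          exact Finset.sum_congr rfl fun a _ => by ring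
      _ = ∑ j, 2 * ((cj j)^2 * ‖x j‖^2) := by
          refine Finset.sum_congr rfl fun j _ => ?_
          simp only [hcj]
          ring
      _ = 2 * Q := by rw [hQ, Finset.mul_sum]
  have hvn : ‖v‖^2 = Q := by
    rw [eu_norm_sq, hQ]
    refine Finset.sum_congr rfl fun j _ => ?_
    rw [hvj j, norm_mul, mul_pow, Complex.norm_real, Real.norm_eq_abs, sq_abs]
  have hcs : (inner ℝ (gradient f x) v : ℝ) ≤ ‖gradient f x‖ * ‖v‖ := real_inner_le_norm _ _
  have h2Q : 2 * Q ≤ ‖gradient f x‖ * ‖v‖ := by rw [← hLv, ← hgrad]; exact hcs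
  show 4 * Q ≤ ‖gradient f x‖^2
  rcases eq_or_lt_of_le hQ0 with h | h
  · rw [← h]
    simpa using sq_nonneg ‖gradient f x‖
  · exact sq_trick (norm_nonneg _) (norm_nonneg _) h hvn h2Q


section auxmain
variable {N r : ℕ}

lemma quad_bound (β : Fin N → EuclideanSpace ℝ (Fin r)) (α : EuclideanSpace ℝ (Fin r))
    (μ : EuclideanSpace ℂ (Fin N) → EuclideanSpace ℝ (Fin r))
    (hμ : ∀ x : EuclideanSpace ℂ (Fin N), ∀ a : Fin r,
      μ x a = (1 / 2 : ℝ) * (∑ j, ‖x j‖ ^ 2 * β j a) - α a)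
    (x : EuclideanSpace ℂ (Fin N)) :
    ‖μ x + α‖ ≤ ((∑ j, ‖β j‖) + 1) * ‖x‖^2 := by
  classical
  have coordle : ∀ j, ‖x j‖ ≤ ‖x‖ := by
    intro j
    rw [EuclideanSpace.norm_eq,
      show ‖x j‖ = Real.sqrt (‖x j‖^2) from (Real.sqrt_sq (norm_nonneg _)).symm]
    apply Real.sqrt_le_sqrt
    exact Finset.single_le_sum (f := fun i => ‖x i‖^2) (fun i _ => sq_nonneg _) (mem_univ j)
  have hdecomp : μ x + α = ∑ j, ((1/2 : ℝ) * ‖x j‖^2) • β j := by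
    ext a
    have hsum : (∑ j, ((1/2 : ℝ) * ‖x j‖^2) • β j) a = ∑ j, (((1/2 : ℝ) * ‖x j‖^2) • β j) a := by
      classical
      induction (Finset.univ : Finset (Fin N)) using Finset.induction with
      | empty => rfl
      | insert j s hj ih => rw [Finset.sum_insert hj, Finset.sum_insert hj, PiLp.add_apply, ih]
    rw [PiLp.add_apply, hμ x a, hsum]
    simp only [PiLp.smul_apply, smul_eq_mul]
    rw [Finset.mul_sum]
    have : ∑ j, 1/2 * (‖x j‖^2 * β j a) = ∑ j, 1/2 * ‖x j‖^2 * β j a :=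
      Finset.sum_congr rfl fun j _ => by ring
    rw [this]
    ring
  rw [hdecomp]
  calc ‖∑ j, ((1/2 : ℝ) * ‖x j‖^2) • β j‖ ≤ ∑ j, ‖((1/2 : ℝ) * ‖x j‖^2) • β j‖ :=
        norm_sum_le _ _
  _ ≤ ∑ j, ‖β j‖ * ‖x‖^2 := by
      refine Finset.sum_le_sum fun j _ => ?_
      rw [norm_smul]
      have h1 : ‖(1/2 : ℝ) * ‖x j‖^2‖ ≤ ‖x‖^2 := by
        rw [Real.norm_eq_abs, abs_of_nonneg (by positivity)]
        have := coordle j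
        nlinarith [norm_nonneg (x j), norm_nonneg x]
      calc ‖(1/2 : ℝ) * ‖x j‖^2‖ * ‖β j‖ ≤ ‖x‖^2 * ‖β j‖ :=
            mul_le_mul_of_nonneg_right h1 (norm_nonneg _)
      _ = ‖β j‖ * ‖x‖^2 := by ring
  _ ≤ ((∑ j, ‖β j‖) + 1) * ‖x‖^2 := by
      rw [← Finset.sum_mul]
      have h2 : (0:ℝ) ≤ ‖x‖^2 := sq_nonneg _
      nlinarith [h2]

end auxmain

lemma final_arith (c lam B C T W m2 X2 Q G : ℝ) (hc : 0<c) (hlam : 0<lam) (hB : 0<B)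
    (hC : 0<C) (hT0 : 0 ≤ T) (hW : 0 ≤ W) (hm2 : 0 ≤ m2) (hX2 : 0 ≤ X2)
    (hks : T ≤ C * (W * m2)) (hxq : W ≤ B * X2)
    (hQS : c^2*X2*(lam*m2) ≤ Q) (hgl : 4*Q ≤ G) :
    (4*c^2*lam)/(B*C) * T ≤ G := by
  have h1 : (4*c^2*lam)/(B*C) * T ≤ (4*c^2*lam)/(B*C) * (C * (W * m2)) :=
    mul_le_mul_of_nonneg_left hks (by positivity)
  have h2 : (4*c^2*lam)/(B*C) * (C * (W * m2)) = (4*c^2*lam)/B * (W * m2) := by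
    field_simp
  have h3 : (4*c^2*lam)/B * (W * m2) ≤ (4*c^2*lam)/B * ((B*X2) * m2) := by
    apply mul_le_mul_of_nonneg_left _ (by positivity)
    exact mul_le_mul_of_nonneg_right hxq hm2
  have h4 : (4*c^2*lam)/B * ((B*X2) * m2) = 4 * (c^2*X2*(lam*m2)) := by
    field_simp
  linarith

/-- **Local Łojasiewicz estimate near a point with trivial infinitesimal stabilizer
(Proposition `FreeCase`).**  Let `μ x = (1/2) ∑ⱼ |xⱼ|² βⱼ - α` be the moment map of a
linear torus action on `ℂᴺ` and `f = ‖μ‖²`.  Suppose `y ≠ 0` has trivial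
infinitesimal stabilizer, i.e. the weights `{βⱼ : yⱼ ≠ 0}` span `ℝʳ`.  Then for any
`μ_c ∈ ℝʳ` with `f_c = ‖μ_c‖²` there are an open neighborhood `U` of `ŷ = y/‖y‖`
(in the unit sphere) and constants `k > 0`, `ε > 0` such that
`‖∇f x‖² ≥ k |f x - f_c| ^ (3/2)` for all `x ≠ 0` with `x/‖x‖ ∈ U` and
`‖μ x - μ_c‖ < ε`. -/
theorem stmt_13
    (N r : ℕ) (hN : 1 ≤ N) (hr : 1 ≤ r)
    (β : Fin N → EuclideanSpace ℝ (Fin r)) (α : EuclideanSpace ℝ (Fin r))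
    (μ : EuclideanSpace ℂ (Fin N) → EuclideanSpace ℝ (Fin r))
    (hμ : ∀ x : EuclideanSpace ℂ (Fin N), ∀ a : Fin r,
      μ x a = (1 / 2 : ℝ) * (∑ j, ‖x j‖ ^ 2 * β j a) - α a)
    (f : EuclideanSpace ℂ (Fin N) → ℝ)
    (hf : ∀ x, f x = ‖μ x‖ ^ 2)
    (y : EuclideanSpace ℂ (Fin N)) (hy : y ≠ 0)
    (hstab : Submodule.span ℝ (β '' {j : Fin N | y j ≠ 0}) = ⊤)
    (mc : EuclideanSpace ℝ (Fin r)) :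
    ∃ U : Set (EuclideanSpace ℂ (Fin N)), IsOpen U ∧ ‖y‖⁻¹ • y ∈ U ∧
      ∃ k > (0 : ℝ), ∃ ε > (0 : ℝ),
        ∀ x : EuclideanSpace ℂ (Fin N), x ≠ 0 → ‖x‖⁻¹ • x ∈ U →
          ‖μ x - mc‖ < ε →
            k * |f x - ‖mc‖ ^ 2| ^ (3 / 2 : ℝ) ≤ ‖gradient f x‖ ^ 2 := by
  classical
  set S : Finset (Fin N) := Finset.univ.filter (fun j => y j ≠ 0) with hS
  have hSmem : ∀ j, j ∈ S ↔ y j ≠ 0 := by intro j; simp [hS]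
  have hSne : S.Nonempty := by
    obtain ⟨j, hj⟩ : ∃ j, y j ≠ 0 := by
      by_contra h
      push_neg at h
      exact hy (by ext j; exact h j)
    exact ⟨j, (hSmem j).mpr hj⟩
  have hspan' : Submodule.span ℝ (β '' ↑S) = ⊤ := by
    have hSset : (↑S : Set (Fin N)) = {j | y j ≠ 0} := by ext j; simp [hS]
    rw [hSset]; exact hstab
  obtain ⟨lam, hlam, hcoer⟩ := coercive hr S β hspan'
  have hy0 : (0:ℝ) < ‖y‖ := norm_pos_iff.mpr hy
  set yh : EuclideanSpace ℂ (Fin N) := ‖y‖⁻¹ • y with hyh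
  set m : ℝ := S.inf' hSne (fun j => ‖y j‖) with hm
  have hm0 : 0 < m := by
    rw [hm, Finset.lt_inf'_iff]
    intro j hj
    exact norm_pos_iff.mpr ((hSmem j).mp hj)
  set c : ℝ := m / (2*‖y‖) with hc
  have hc0 : 0 < c := by rw [hc]; positivity
  have hyhc : ∀ j ∈ S, 2*c ≤ ‖yh j‖ := by
    intro j hj
    have h1 : m ≤ ‖y j‖ := Finset.inf'_le _ hj
    have h2 : yh j = ‖y‖⁻¹ • y j := rfl
    rw [h2, norm_smul, Real.norm_eq_abs, abs_of_pos (inv_pos.mpr hy0)]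
    have h9 : 2*c = ‖y‖⁻¹ * m := by rw [hc]; field_simp
    rw [h9]
    exact mul_le_mul_of_nonneg_left h1 (inv_pos.mpr hy0).le
  set U : Set (EuclideanSpace ℂ (Fin N)) := {u | ∀ j ∈ S, ‖u j - yh j‖ < c} with hU
  have hUopen : IsOpen U := by
    have heq : U = ⋂ j ∈ S, (fun u : EuclideanSpace ℂ (Fin N) => ‖u j - yh j‖) ⁻¹' Set.Iio c := by
      ext u; simp [hU]
    rw [heq]
    apply isOpen_biInter_finset
    intro j _
    apply IsOpen.preimage _ isOpen_Iio
    exact (((EuclideanSpace.proj j).restrictScalars ℝ).continuous.sub continuous_const).norm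
  have hyU : yh ∈ U := by
    intro j _
    simp only [sub_self, norm_zero]
    exact hc0
  set B : ℝ := (∑ j, ‖β j‖) + 1 with hB
  have hB0 : 0 < B := by
    rw [hB]
    have : (0:ℝ) ≤ ∑ j, ‖β j‖ := Finset.sum_nonneg fun j _ => norm_nonneg _
    linarith
  obtain ⟨ε, hε0, C, hC0, hkey⟩ := key_scalar mc α
  refine ⟨U, hUopen, hyU, (4*c^2*lam)/(B*C), by positivity, ε, hε0, ?_⟩
  intro x hx hxU hxε
  have hx0 : 0 < ‖x‖ := norm_pos_iff.mpr hx
  -- coordinate lower bound on U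
  have hcoord : ∀ j ∈ S, c * ‖x‖ ≤ ‖x j‖ := by
    intro j hj
    have h1 := hxU j hj
    have h2 : (‖x‖⁻¹ • x) j = ‖x‖⁻¹ • x j := rfl
    rw [h2] at h1
    have h3 : ‖yh j‖ - ‖‖x‖⁻¹ • x j - yh j‖ ≤ ‖‖x‖⁻¹ • x j‖ := by
      have h4 := norm_sub_le (‖x‖⁻¹ • x j) (‖x‖⁻¹ • x j - yh j)
      have h5 : (‖x‖⁻¹ • x j) - (‖x‖⁻¹ • x j - yh j) = yh j := by abel
      rw [h5] at h4
      linarith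
    have h6 : ‖‖x‖⁻¹ • x j‖ = ‖x‖⁻¹ * ‖x j‖ := by
      rw [norm_smul, Real.norm_eq_abs, abs_of_pos (inv_pos.mpr hx0)]
    have h7 := hyhc j hj
    have h8 : c ≤ ‖x‖⁻¹ * ‖x j‖ := by
      rw [h6] at h3
      linarith
    calc c * ‖x‖ ≤ (‖x‖⁻¹ * ‖x j‖) * ‖x‖ := mul_le_mul_of_nonneg_right h8 (le_of_lt hx0)
    _ = ‖x j‖ := by field_simp
  -- main chain
  have hgl := grad_lower β α μ hμ f hf x
  have hQS : c^2*‖x‖^2 * (lam * ‖μ x‖^2) ≤ ∑ j, (∑ a, β j a * μ x a)^2 * ‖x j‖^2 := by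
    have hstep1 : lam * ‖μ x‖^2 ≤ ∑ j ∈ S, (∑ a, β j a * μ x a)^2 := by
      have := hcoer (μ x)
      have hinner_eq : ∀ j, (inner ℝ (β j) (μ x) : ℝ) = ∑ a, β j a * μ x a := by
        intro j
        rw [PiLp.inner_apply]
        exact Finset.sum_congr rfl fun a _ => by rw [RCLike.inner_apply, conj_trivial, mul_comm]
      calc lam * ‖μ x‖^2 ≤ ∑ j ∈ S, (inner ℝ (β j) (μ x) : ℝ)^2 := this
      _ = ∑ j ∈ S, (∑ a, β j a * μ x a)^2 := Finset.sum_congr rfl fun j _ => by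
            rw [hinner_eq j]
    calc c^2*‖x‖^2 * (lam * ‖μ x‖^2) ≤ c^2*‖x‖^2 * ∑ j ∈ S, (∑ a, β j a * μ x a)^2 :=
          mul_le_mul_of_nonneg_left hstep1 (by positivity)
    _ = ∑ j ∈ S, (∑ a, β j a * μ x a)^2 * (c^2*‖x‖^2) := by
        rw [Finset.mul_sum]
        exact Finset.sum_congr rfl fun j _ => by ring
    _ ≤ ∑ j ∈ S, (∑ a, β j a * μ x a)^2 * ‖x j‖^2 := by
        refine Finset.sum_le_sum fun j hj => ?_
        apply mul_le_mul_of_nonneg_left _ (sq_nonneg _)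
        have h9 := hcoord j hj
        calc c^2*‖x‖^2 = (c*‖x‖)^2 := by ring
        _ ≤ ‖x j‖^2 := pow_le_pow_left₀ (by positivity) h9 2
    _ ≤ ∑ j, (∑ a, β j a * μ x a)^2 * ‖x j‖^2 := by
        apply Finset.sum_le_sum_of_subset_of_nonneg (Finset.subset_univ S)
        intro j _ _
        positivity
  have hxq : ‖μ x + α‖ ≤ B * ‖x‖^2 := quad_bound β α μ hμ x
  have hks := hkey (μ x) hxε
  -- combine
  rw [hf x]
  exact final_arith c lam B C _ _ _ _ _ _ hc0 hlam hB0 hC0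
    (Real.rpow_nonneg (abs_nonneg _) _) (norm_nonneg _) (sq_nonneg _) (sq_nonneg _)
    hks hxq hQS hgl
end

section
/- Let H be a group acting on a set X, G a normal subgroup of H acting freely on X, and x̃ ∈ X a point such that for every h ∈ H there exists g ∈ G with h·x̃ = g·x̃; let φ : H → G be the unique map with h·x̃ = φ(h)·x̃ for all h. Then the set ker φ = {h ∈ H : φ(h) = 1} is a subgroup of H, and the restriction to ker φ of the quotient homomorphism H → H/G is a group isomorphism from ker φ onto H/G. Consequently H is an internal semidirect product of ker φ ≅ H/G and G. -/
/-- **The kernel of the lifting cocycle is a complement to `G`.**  Let `H` act on `X`,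
`G ⊴ H` act freely, `xt ∈ X`, and `φ : H → G` the unique map with
`h • xt = φ h • xt` for all `h ∈ H`.  Then `ker φ = {h : φ h = 1}` is a subgroup of
`H`, the restriction of the quotient homomorphism `H → H/G` to `ker φ` is a group
isomorphism onto `H/G` (i.e. it is bijective), and consequently `H` is an internal
semidirect product: every `h ∈ H` factors uniquely as `h = k * g` with `k ∈ ker φ`
and `g ∈ G`. -/
theorem stmt_15
    {H : Type*} [Group H] {X : Type*} [MulAction H X]
    (G : Subgroup H) [G.Normal]
    (hfree : ∀ g ∈ G, ∀ x : X, g • x = x → g = 1)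
    (xt : X) (φ : H → G)
    (hφ : ∀ h : H, h • xt = (φ h : H) • xt) :
    ∃ K : Subgroup H,
      (∀ h : H, h ∈ K ↔ φ h = 1) ∧
      Function.Bijective (fun kk : K => QuotientGroup.mk' G (kk : H)) ∧
      ∀ h : H, ∃! p : K × G, h = (p.1 : H) * (p.2 : H) := by
  refine ⟨MulAction.stabilizer H xt, ?_, ⟨?_, ?_⟩, ?_⟩
  · intro h
    constructor
    · intro hh
      have h1 : (φ h : H) • xt = xt := by rw [← hφ]; exact hh
      exact Subtype.ext (hfree (φ h) (φ h).2 xt h1)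
    · intro hh
      show h • xt = xt
      rw [hφ, hh]
      simp
  · -- injective
    rintro ⟨k1, hk1⟩ ⟨k2, hk2⟩ heq
    simp only [QuotientGroup.mk'_apply, QuotientGroup.eq] at heq
    have hk1' : k1⁻¹ • xt = xt := inv_mem hk1
    have hfix : (k1⁻¹ * k2) • xt = xt := by rw [mul_smul, hk2, hk1']
    exact Subtype.ext (inv_mul_eq_one.mp (hfree _ heq xt hfix))
  · -- surjective
    intro q
    obtain ⟨h, rfl⟩ := QuotientGroup.mk'_surjective G q
    have hk : ((φ h : H)⁻¹ * h) • xt = xt := by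
      rw [mul_smul, hφ h, ← mul_smul, inv_mul_cancel, one_smul]
    refine ⟨⟨(φ h : H)⁻¹ * h, hk⟩, ?_⟩
    simp only [QuotientGroup.mk'_apply, QuotientGroup.eq]
    have : ((φ h : H)⁻¹ * h)⁻¹ * h = h⁻¹ * (φ h : H) * h := by group
    rw [this]
    exact Subgroup.Normal.conj_mem' ‹G.Normal› _ (φ h).2 h
  · intro h
    have hk : ((φ h : H)⁻¹ * h) • xt = xt := by
      rw [mul_smul, hφ h, ← mul_smul, inv_mul_cancel, one_smul]
    have hg : h⁻¹ * (φ h : H) * h ∈ G := Subgroup.Normal.conj_mem' ‹G.Normal› _ (φ h).2 h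
    refine ⟨(⟨(φ h : H)⁻¹ * h, hk⟩, ⟨h⁻¹ * (φ h : H) * h, hg⟩), by group, ?_⟩
    rintro ⟨⟨k, hkK⟩, ⟨g, hgG⟩⟩ hfac
    simp only at hfac
    have key : k⁻¹ * ((φ h : H)⁻¹ * h) ∈ G := by
      have e : k⁻¹ * ((φ h : H)⁻¹ * h) = (k⁻¹ * (φ h : H)⁻¹ * k) * g := by
        rw [hfac]; group
      rw [e]
      exact mul_mem (Subgroup.Normal.conj_mem' ‹G.Normal› _ (inv_mem (φ h).2) k) hgG
    have hkK' : k⁻¹ • xt = xt := inv_mem hkK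
    have hfix : (k⁻¹ * ((φ h : H)⁻¹ * h)) • xt = xt := by
      rw [mul_smul, hk, hkK']
    have hkeq : k = (φ h : H)⁻¹ * h := inv_mul_eq_one.mp (hfree _ key xt hfix)
    have hg1 : g = k⁻¹ * h := by rw [hfac]; group
    have hgeq : g = h⁻¹ * (φ h : H) * h := by rw [hg1, hkeq]; group
    exact Prod.ext (Subtype.ext hkeq) (Subtype.ext hgeq)
end

section
/- Let f = ‖μ_c‖² on ℂᴺ × ℂᴺ. Then for all (x,y) ∈ ℂᴺ × ℂᴺ one has ‖∇f(x,y)‖² = 4·Σ_{j=1}^N (|x_j|² + |y_j|²)·|⟨β_j, μ_c(x,y)⟩|², where ⟨β_j, μ_c(x,y)⟩ = Σ_{a=1}^r (β_j)_a·μ_c(x,y)_a ∈ ℂ. Consequently, (x,y) is a critical point of f if and only if for every j = 1, …, N either (x_j, y_j) = (0,0) or ⟨β_j, μ_c(x,y)⟩ = 0. -/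
open scoped ComplexConjugate

/-- **Norm of the gradient of `‖μ_c‖²` and the critical point equations on a hypertoric
variety.**  On `T*ℂᴺ = ℂᴺ × ℂᴺ` (modelled as `EuclideanSpace ℂ (Fin N ⊕ Fin N)`, with
`x j = z (Sum.inl j)`, `y j = z (Sum.inr j)`), let
`μ_c (x,y) = ∑ⱼ xⱼ yⱼ βⱼ - α_ℂ` and `f = ‖μ_c‖²`.  Then
`‖∇f(x,y)‖² = 4 ∑ⱼ (|xⱼ|² + |yⱼ|²) |⟨βⱼ, μ_c(x,y)⟩|²`, and `(x,y)` is a critical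
point of `f` iff for every `j` either `(xⱼ, yⱼ) = (0,0)` or `⟨βⱼ, μ_c(x,y)⟩ = 0`. -/
theorem stmt_18
    (N r : ℕ) (β : Fin N → Fin r → ℝ) (αC : EuclideanSpace ℂ (Fin r))
    (μc : EuclideanSpace ℂ (Fin N ⊕ Fin N) → EuclideanSpace ℂ (Fin r))
    (hμc : ∀ z : EuclideanSpace ℂ (Fin N ⊕ Fin N), ∀ a : Fin r,
      μc z a = (∑ j, z (Sum.inl j) * z (Sum.inr j) * (β j a : ℂ)) - αC a)
    (f : EuclideanSpace ℂ (Fin N ⊕ Fin N) → ℝ)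
    (hf : ∀ z, f z = ‖μc z‖ ^ 2)
    (z : EuclideanSpace ℂ (Fin N ⊕ Fin N)) :
    ‖gradient f z‖ ^ 2 =
      4 * ∑ j, (‖z (Sum.inl j)‖ ^ 2 + ‖z (Sum.inr j)‖ ^ 2) *
        ‖∑ a, (β j a : ℂ) * μc z a‖ ^ 2 ∧
    (gradient f z = 0 ↔
      ∀ j : Fin N, (z (Sum.inl j) = 0 ∧ z (Sum.inr j) = 0) ∨
        (∑ a, (β j a : ℂ) * μc z a) = 0) := by
  classical
  -- real-linear coordinate projections
  let pr : (Fin N ⊕ Fin N) → (EuclideanSpace ℂ (Fin N ⊕ Fin N) →L[ℝ] ℂ) :=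
    fun i => (EuclideanSpace.proj i).restrictScalars ℝ
  -- component derivatives
  let L : Fin r → (EuclideanSpace ℂ (Fin N ⊕ Fin N) →L[ℝ] ℂ) :=
    fun a => ∑ j, (β j a : ℂ) •
      (z (Sum.inl j) • pr (Sum.inr j) + z (Sum.inr j) • pr (Sum.inl j))
  have hcomp : ∀ a, HasFDerivAt (fun w : EuclideanSpace ℂ (Fin N ⊕ Fin N) =>
      (∑ j, w (Sum.inl j) * w (Sum.inr j) * (β j a : ℂ)) - αC a) (L a) z := by
    intro a
    apply HasFDerivAt.sub_const
    apply HasFDerivAt.fun_sum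
    intro j _
    have hx : HasFDerivAt (fun w : EuclideanSpace ℂ (Fin N ⊕ Fin N) => w (Sum.inl j))
        (pr (Sum.inl j)) z := (pr (Sum.inl j)).hasFDerivAt
    have hy : HasFDerivAt (fun w : EuclideanSpace ℂ (Fin N ⊕ Fin N) => w (Sum.inr j))
        (pr (Sum.inr j)) z := (pr (Sum.inr j)).hasFDerivAt
    exact (hx.mul hy).mul_const _
  let e := PiLp.continuousLinearEquiv 2 ℝ (fun _ : Fin r => ℂ)
  let D : EuclideanSpace ℂ (Fin N ⊕ Fin N) →L[ℝ] EuclideanSpace ℂ (Fin r) :=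
    ((e.symm : (Fin r → ℂ) →L[ℝ] EuclideanSpace ℂ (Fin r))).comp (ContinuousLinearMap.pi L)
  have hfun : μc = fun w => e.symm (fun a =>
      (∑ j, w (Sum.inl j) * w (Sum.inr j) * (β j a : ℂ)) - αC a) := by
    funext w
    exact PiLp.ext fun a => hμc w a
  have hD : HasFDerivAt μc D z := by
    rw [hfun]
    exact (e.symm.hasFDerivAt).comp z (hasFDerivAt_pi.2 hcomp)
  have hf' : f = fun w => (inner (𝕜 := ℝ) (μc w) (μc w)) := by
    funext w; rw [hf, real_inner_self_eq_norm_sq]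
  have hF : HasFDerivAt f ((fderivInnerCLM ℝ (μc z, μc z)).comp (D.prod D)) z := by
    rw [hf']; exact hD.inner ℝ hD
  set w : Fin N → ℂ := fun j => ∑ a, (β j a : ℂ) * μc z a with hw
  let g : EuclideanSpace ℂ (Fin N ⊕ Fin N) :=
    (WithLp.equiv 2 ((Fin N ⊕ Fin N) → ℂ)).symm
      (Sum.elim (fun j => 2 * w j * conj (z (Sum.inr j)))
                (fun j => 2 * w j * conj (z (Sum.inl j))))
  have hg1 : ∀ j, g (Sum.inl j) = 2 * w j * conj (z (Sum.inr j)) := fun j => rfl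
  have hg2 : ∀ j, g (Sum.inr j) = 2 * w j * conj (z (Sum.inl j)) := fun j => rfl
  have hDv : ∀ (v : EuclideanSpace ℂ (Fin N ⊕ Fin N)) (a : Fin r),
      D v a = ∑ j, (β j a : ℂ) *
        (z (Sum.inl j) * v (Sum.inr j) + z (Sum.inr j) * v (Sum.inl j)) := by
    intro v a
    show (L a) v = _
    simp only [L, ContinuousLinearMap.sum_apply, ContinuousLinearMap.smul_apply,
      ContinuousLinearMap.add_apply, smul_eq_mul]
    refine Finset.sum_congr rfl fun j _ => ?_
    have h1 : pr (Sum.inr j) v = v (Sum.inr j) := rfl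
    have h2 : pr (Sum.inl j) v = v (Sum.inl j) := rfl
    rw [h1, h2]
  have hconjw : ∀ j, conj (w j) = ∑ a, (β j a : ℂ) * conj (μc z a) := by
    intro j
    rw [hw]
    rw [map_sum]
    exact Finset.sum_congr rfl fun a _ => by rw [map_mul, Complex.conj_ofReal]
  have hkey : (InnerProductSpace.toDual ℝ (EuclideanSpace ℂ (Fin N ⊕ Fin N))) g
      = (fderivInnerCLM ℝ (μc z, μc z)).comp (D.prod D) := by
    apply ContinuousLinearMap.ext
    intro v
    rw [InnerProductSpace.toDual_apply_apply, ContinuousLinearMap.comp_apply,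
      ContinuousLinearMap.prod_apply, fderivInnerCLM_apply]
    have claim1 : ∑ i, conj (g i) * v i = 2 * ∑ a, conj (μc z a) * D v a := by
      rw [Fintype.sum_sum_type]
      have hrhs : 2 * ∑ a, conj (μc z a) * D v a
          = ∑ j, (2 * conj (w j) * z (Sum.inr j) * v (Sum.inl j)
              + 2 * conj (w j) * z (Sum.inl j) * v (Sum.inr j)) := by
        rw [Finset.mul_sum]
        calc ∑ a, 2 * (conj (μc z a) * D v a)
            = ∑ a, ∑ j, 2 * conj (μc z a) * ((β j a : ℂ) *
                (z (Sum.inl j) * v (Sum.inr j) + z (Sum.inr j) * v (Sum.inl j))) := by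
              refine Finset.sum_congr rfl fun a _ => ?_
              rw [hDv, Finset.mul_sum, Finset.mul_sum]
              exact Finset.sum_congr rfl fun j _ => by ring
          _ = ∑ j, ∑ a, 2 * conj (μc z a) * ((β j a : ℂ) *
                (z (Sum.inl j) * v (Sum.inr j) + z (Sum.inr j) * v (Sum.inl j))) :=
              Finset.sum_comm
          _ = _ := by
              refine Finset.sum_congr rfl fun j _ => ?_
              have : (2 * conj (w j) * z (Sum.inr j) * v (Sum.inl j)
                  + 2 * conj (w j) * z (Sum.inl j) * v (Sum.inr j))
                  = (∑ a, (β j a : ℂ) * conj (μc z a)) *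
                    (2 * (z (Sum.inr j) * v (Sum.inl j) + z (Sum.inl j) * v (Sum.inr j))) := by
                rw [← hconjw]; ring
              rw [this, Finset.sum_mul]
              exact Finset.sum_congr rfl fun a _ => by ring
      rw [hrhs, ← Finset.sum_add_distrib]
      refine Finset.sum_congr rfl fun j _ => ?_
      rw [hg1, hg2]
      rw [map_mul, map_mul, map_mul, map_mul, Complex.conj_conj, Complex.conj_conj]
      have h2 : conj (2 : ℂ) = 2 := map_ofNat (starRingEnd ℂ) 2
      rw [h2]
    have lhs_eq : (inner (𝕜 := ℝ) g v : ℝ) = ∑ i, ((conj (g i) * v i : ℂ)).re := by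
      rw [PiLp.inner_apply]
      exact Finset.sum_congr rfl fun i _ => by rw [Complex.inner, mul_comm]
    have rhs1 : (inner (𝕜 := ℝ) (μc z) (D v) : ℝ) = ∑ a, ((conj (μc z a) * D v a : ℂ)).re := by
      rw [PiLp.inner_apply]
      exact Finset.sum_congr rfl fun a _ => by rw [Complex.inner, mul_comm]
    have rhs2 : (inner (𝕜 := ℝ) (D v) (μc z) : ℝ) = ∑ a, ((conj (μc z a) * D v a : ℂ)).re := by
      rw [PiLp.inner_apply]
      refine Finset.sum_congr rfl fun a _ => ?_
      rw [Complex.inner, mul_comm (μc z a)]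
      show ((conj (D v a) * μc z a : ℂ)).re = _
      rw [← Complex.conj_re ((conj (D v a) * μc z a : ℂ)), map_mul, Complex.conj_conj, mul_comm]
    rw [lhs_eq, rhs1, rhs2, ← Complex.re_sum, ← Complex.re_sum, ← Complex.add_re, ← two_mul,
      claim1]
  have hG : HasGradientAt f g z := by
    rw [hasGradientAt_iff_hasFDerivAt, hkey]; exact hF
  have hgrad : gradient f z = g := hG.gradient
  constructor
  · rw [hgrad]
    rw [EuclideanSpace.norm_eq, Real.sq_sqrt (by positivity)]
    rw [Fintype.sum_sum_type, Finset.mul_sum, ← Finset.sum_add_distrib]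
    refine Finset.sum_congr rfl fun j _ => ?_
    rw [hg1, hg2]
    have hx : ‖z (Sum.inl j)‖ = ‖conj (z (Sum.inl j))‖ := (RCLike.norm_conj _).symm
    have hy : ‖z (Sum.inr j)‖ = ‖conj (z (Sum.inr j))‖ := (RCLike.norm_conj _).symm
    rw [norm_mul, norm_mul, norm_mul, norm_mul]
    have h2 : ‖(2 : ℂ)‖ = 2 := by norm_num
    rw [h2, hx, hy]
    ring
  · rw [hgrad]
    constructor
    · intro h j
      have h1 : g (Sum.inl j) = 0 := by rw [h]; rfl
      have h2 : g (Sum.inr j) = 0 := by rw [h]; rfl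
      rw [hg1] at h1; rw [hg2] at h2
      by_cases hwj : w j = 0
      · right; exact hwj
      · left
        constructor
        · have := mul_eq_zero.1 h2
          rcases this with h' | h'
          · exact absurd (mul_eq_zero.1 h') (by push_neg; exact ⟨two_ne_zero, hwj⟩)
          · exact star_eq_zero.1 h'
        · have := mul_eq_zero.1 h1
          rcases this with h' | h'
          · exact absurd (mul_eq_zero.1 h') (by push_neg; exact ⟨two_ne_zero, hwj⟩)
          · exact star_eq_zero.1 h'
    · intro h
      refine PiLp.ext fun i => ?_
      show g i = 0
      cases i with
      | inl j =>
        rw [hg1]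
        rcases h j with ⟨_, h2⟩ | hwj
        · rw [h2, map_zero, mul_zero]
        · rw [show w j = 0 from hwj]; ring
      | inr j =>
        rw [hg2]
        rcases h j with ⟨h1, _⟩ | hwj
        · rw [h1, map_zero, mul_zero]
        · rw [show w j = 0 from hwj]; ring
end
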